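/- arXiv:2011.00334 — 6 statements merged into one kernel-verified Lean document; each statement's English description precedes it below -/
import Mathlib

section
/- Let G be a countably based profinite group with a normal filtration series {G_n} (descending open normal subgroups with trivial intersection), and let N be a closed normal subgroup of G whose Hausdorff dimension with respect to {G_n}, namely liminf log|NG_n:G_n|/log|G:G_n|, is given by a proper limit. Then for every closed subgroup H of G containing N, one has hdim(H) = (1 - hdim(N)) * hdim_{G/N}(H/N) + hdim(N), where hdim_{G/N} is computed with respect to the filtration {G_nN/N} of G/N. -/
open Filter

/-- Hausdorff dimension of a subgroup `H` of a profinite group with respect to a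
filtration series `Gn`: `liminf log|H Gₙ : Gₙ| / log|G : Gₙ|`.  Here
`|H Gₙ : Gₙ| = (Gn n).relindex H`. -/
noncomputable def hdimFil {G : Type*} [Group G] (Gn : ℕ → Subgroup G) (H : Subgroup G) : ℝ :=
  Filter.atTop.liminf fun n =>
    Real.log ((Gn n).relIndex H : ℝ) / Real.log ((Gn n).index : ℝ)

section GroupAux
variable {G : Type*} [Group G]

private lemma myIndex_eq_sup_mul (K N : Subgroup G) [K.Normal] :
    K.index = (K ⊔ N).index * K.relIndex N := by
  rw [← Subgroup.relIndex_mul_index (le_sup_left : K ≤ K ⊔ N), Subgroup.relIndex_sup_left,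
    mul_comm]

private lemma myModular (K : Subgroup G) {N H : Subgroup G} [N.Normal] (hNH : N ≤ H) :
    H ⊓ (K ⊔ N) = (H ⊓ K) ⊔ N := by
  apply le_antisymm
  · intro x hx
    rw [Subgroup.mem_inf] at hx
    obtain ⟨hxH, hxKN⟩ := hx
    rw [← SetLike.mem_coe, Subgroup.mul_normal] at hxKN
    obtain ⟨k, hk, n, hn, rfl⟩ := hxKN
    have hkH : k ∈ H := (mul_mem_cancel_right (hNH hn)).mp hxH
    rw [← SetLike.mem_coe, Subgroup.mul_normal]
    exact ⟨k, Subgroup.mem_inf.mpr ⟨hkH, hk⟩, n, hn, rfl⟩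
  · exact sup_le (le_inf inf_le_left (inf_le_right.trans le_sup_left))
      (le_inf hNH le_sup_right)

private lemma mySubgroupOf_sup (K : Subgroup G) {N H : Subgroup G} [N.Normal] (hNH : N ≤ H) :
    (K ⊔ N).subgroupOf H = K.subgroupOf H ⊔ N.subgroupOf H := by
  apply Subgroup.map_injective H.subtype_injective
  rw [Subgroup.map_sup, Subgroup.subgroupOf_map_subtype, Subgroup.subgroupOf_map_subtype,
    Subgroup.subgroupOf_map_subtype, inf_of_le_left hNH, inf_comm (K ⊔ N) H, inf_comm K H,
    myModular K hNH]

private lemma myRelindex_eq_sup_mul (K N : Subgroup G) {H : Subgroup G} [K.Normal] [N.Normal]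
    (hNH : N ≤ H) :
    K.relIndex H = (K ⊔ N).relIndex H * K.relIndex N := by
  have h1 := myIndex_eq_sup_mul (K.subgroupOf H) (N.subgroupOf H)
  rw [← mySubgroupOf_sup K hNH, Subgroup.relIndex_subgroupOf hNH] at h1
  exact h1

private lemma myIndex_map_quot (K N : Subgroup G) [N.Normal] :
    (K.map (QuotientGroup.mk' N)).index = (K ⊔ N).index := by
  rw [Subgroup.index_map, MonoidHom.range_eq_top_of_surjective _ (QuotientGroup.mk'_surjective N),
    Subgroup.index_top, mul_one, QuotientGroup.ker_mk']

private lemma myRelindex_map_quot (K N H : Subgroup G) [N.Normal] :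
    (K.map (QuotientGroup.mk' N)).relIndex (H.map (QuotientGroup.mk' N))
      = (K ⊔ N).relIndex H := by
  have h := Subgroup.relIndex_comap (H := K.map (QuotientGroup.mk' N))
    (QuotientGroup.mk' N) H
  rw [Subgroup.comap_map_eq, QuotientGroup.ker_mk'] at h
  exact h.symm

end GroupAux

private lemma myLiminf_le (s t : ℕ → ℝ) (hs0 : ∀ n, 0 ≤ s n)
    (ht0 : ∀ n, 0 ≤ t n) (ht1 : ∀ n, t n ≤ 1)
    (h : ∀ ε > 0, ∀ᶠ n in atTop, s n ≤ t n + ε) :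
    atTop.liminf s ≤ atTop.liminf t := by
  refine le_of_forall_pos_le_add fun ε hε => ?_
  have hb : IsBoundedUnder (· ≥ ·) atTop s := isBoundedUnder_of ⟨0, hs0⟩
  have hc : IsCoboundedUnder (· ≥ ·) atTop (fun n => t n + ε) :=
    (isBoundedUnder_of ⟨1 + ε, fun n => add_le_add_left (ht1 n) ε⟩ :
      IsBoundedUnder (· ≤ ·) atTop _).isCoboundedUnder_ge
  have hc2 : IsCoboundedUnder (· ≥ ·) atTop t :=
    (isBoundedUnder_of ⟨1, ht1⟩ : IsBoundedUnder (· ≤ ·) atTop t).isCoboundedUnder_ge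
  have hb2 : IsBoundedUnder (· ≥ ·) atTop t := isBoundedUnder_of ⟨0, ht0⟩
  calc atTop.liminf s ≤ atTop.liminf (fun n => t n + ε) :=
        liminf_le_liminf (h ε hε) hb hc
    _ = atTop.liminf t + ε := liminf_add_const atTop t ε hc2 hb2

private lemma myLiminf_eq (s t : ℕ → ℝ) (hs0 : ∀ n, 0 ≤ s n) (hs1 : ∀ n, s n ≤ 1)
    (ht0 : ∀ n, 0 ≤ t n) (ht1 : ∀ n, t n ≤ 1)
    (h : Tendsto (fun n => s n - t n) atTop (nhds 0)) :
    atTop.liminf s = atTop.liminf t := by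
  have habs : ∀ ε > (0:ℝ), ∀ᶠ n in atTop, |s n - t n| < ε := by
    intro ε hε
    have := NormedAddCommGroup.tendsto_nhds_zero.mp h ε hε
    simpa [Real.norm_eq_abs] using this
  apply le_antisymm
  · refine myLiminf_le s t hs0 ht0 ht1 fun ε hε => ?_
    filter_upwards [habs ε hε] with n hn
    have := (abs_lt.mp hn).2
    linarith
  · refine myLiminf_le t s ht0 hs0 hs1 fun ε hε => ?_
    filter_upwards [habs ε hε] with n hn
    have := (abs_lt.mp hn).1
    linarith

private lemma myLiminf_affine (r a : ℕ → ℝ) (d : ℝ)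
    (hr0 : ∀ n, 0 ≤ r n) (hr1 : ∀ n, r n ≤ 1)
    (ha0 : ∀ n, 0 ≤ a n) (ha1 : ∀ n, a n ≤ 1)
    (hd : Tendsto a atTop (nhds d)) :
    atTop.liminf (fun n => r n * (1 - a n) + a n) = (1 - d) * atTop.liminf r + d := by
  have hd0 : 0 ≤ d := ge_of_tendsto hd (Eventually.of_forall ha0)
  have hd1 : d ≤ 1 := le_of_tendsto hd (Eventually.of_forall ha1)
  have hs0 : ∀ n, 0 ≤ r n * (1 - a n) + a n := fun n => by nlinarith [hr0 n, ha0 n, ha1 n]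
  have hs1 : ∀ n, r n * (1 - a n) + a n ≤ 1 := fun n => by nlinarith [hr1 n, ha1 n, ha0 n, hr0 n]
  have ht0 : ∀ n, 0 ≤ (1 - d) * r n + d := fun n => by nlinarith [hr0 n]
  have ht1 : ∀ n, (1 - d) * r n + d ≤ 1 := fun n => by nlinarith [hr1 n]
  have h1 : Tendsto (fun n => a n - d) atTop (nhds 0) := by
    simpa using hd.sub (tendsto_const_nhds (x := d))
  have hsub : Tendsto (fun n => (r n * (1 - a n) + a n) - ((1 - d) * r n + d))
      atTop (nhds 0) := by
    have heq : (fun n => (r n * (1 - a n) + a n) - ((1 - d) * r n + d))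
        = fun n => (a n - d) * (1 - r n) := funext fun n => by ring
    rw [heq]
    refine squeeze_zero_norm (a := fun n => |a n - d|) (fun n => ?_) ?_
    · rw [Real.norm_eq_abs, abs_mul]
      have h2 : |1 - r n| ≤ 1 := by rw [abs_le]; constructor <;> nlinarith [hr0 n, hr1 n]
      nlinarith [abs_nonneg (a n - d), abs_nonneg (1 - r n)]
    · simpa [Real.norm_eq_abs] using h1.norm
  rw [myLiminf_eq _ _ hs0 hs1 ht0 ht1 hsub]
  have hbdd : IsBoundedUnder (· ≥ ·) atTop r := isBoundedUnder_of ⟨0, hr0⟩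
  have hcob : IsCoboundedUnder (· ≥ ·) atTop r :=
    (isBoundedUnder_of ⟨1, hr1⟩ : IsBoundedUnder (· ≤ ·) atTop r).isCoboundedUnder_ge
  have hmul : atTop.liminf (fun n => (1 - d) * r n) = (1 - d) * atTop.liminf r :=
    (Monotone.map_liminf_of_continuousAt (F := atTop) (f := fun x => (1 - d) * x)
      (fun x y h => mul_le_mul_of_nonneg_left h (by linarith)) r
      ((continuous_const.mul continuous_id).continuousAt) hcob hbdd).symm
  rw [liminf_add_const atTop (fun n => (1 - d) * r n) d
      ((isBoundedUnder_of ⟨1 - d, fun n => by nlinarith [hr1 n]⟩ :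
        IsBoundedUnder (· ≤ ·) atTop _).isCoboundedUnder_ge)
      (isBoundedUnder_of ⟨0, fun n => by nlinarith [hr0 n]⟩), hmul]

private lemma myRatio (A D E : ℝ) (hA : 0 ≤ A) (hE : 0 ≤ E) (hD0 : 0 ≤ D) (hED : E ≤ D) :
    (E + A) / (D + A) = E / D * (1 - A / (D + A)) + A / (D + A) := by
  by_cases hDA : D + A = 0
  · have hD : D = 0 := by linarith
    have hA0 : A = 0 := by linarith
    simp [hDA, hD, hA0]
  · by_cases hD : D = 0
    · have hE0 : E = 0 := le_antisymm (hD ▸ hED) hE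
      rw [hD, hE0]
      simp
    · field_simp
      try ring

theorem quotient_hausdorff_dimension_formula
    {G : Type*} [Group G] [TopologicalSpace G] [IsTopologicalGroup G] [CompactSpace G]
    [TotallyDisconnectedSpace G] [T2Space G] [SecondCountableTopology G]
    (Gn : ℕ → Subgroup G)
    (hopen : ∀ n, IsOpen (Gn n : Set G)) (hnorm : ∀ n, (Gn n).Normal)
    (hdesc : ∀ n, Gn (n + 1) ≤ Gn n) (hinter : ⨅ n, Gn n = ⊥)
    (N : Subgroup G) [N.Normal] (hNclosed : IsClosed (N : Set G))
    (hNproper : Filter.Tendsto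
      (fun n => Real.log ((Gn n).relIndex N : ℝ) / Real.log ((Gn n).index : ℝ))
      Filter.atTop (nhds (hdimFil Gn N)))
    (H : Subgroup G) (hHclosed : IsClosed (H : Set G)) (hNH : N ≤ H) :
    hdimFil Gn H =
      (1 - hdimFil Gn N) *
        hdimFil (fun n => (Gn n).map (QuotientGroup.mk' N)) (H.map (QuotientGroup.mk' N)) +
      hdimFil Gn N := by
  -- Finiteness of all the indices involved
  have hfin : ∀ n, (Gn n).index ≠ 0 := fun n =>
    haveI : Finite (G ⧸ Gn n) := Subgroup.quotient_finite_of_isOpen _ (hopen n)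
    Subgroup.index_ne_zero_of_finite
  have hIdx : ∀ n, (Gn n).index = (Gn n ⊔ N).index * (Gn n).relIndex N := fun n =>
    haveI := hnorm n
    myIndex_eq_sup_mul (Gn n) N
  have hRel : ∀ n, (Gn n).relIndex H = (Gn n ⊔ N).relIndex H * (Gn n).relIndex N := fun n =>
    haveI := hnorm n
    myRelindex_eq_sup_mul (Gn n) N hNH
  have hD_nz : ∀ n, (Gn n ⊔ N).index ≠ 0 := fun n =>
    left_ne_zero_of_mul (hIdx n ▸ hfin n)
  have hA_nz : ∀ n, (Gn n).relIndex N ≠ 0 := fun n =>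
    right_ne_zero_of_mul (hIdx n ▸ hfin n)
  have hRelH_nz : ∀ n, (Gn n).relIndex H ≠ 0 := fun n => by
    haveI := hnorm n
    intro h0
    exact hfin n (Nat.eq_zero_of_zero_dvd
      (h0 ▸ Subgroup.relIndex_dvd_index_of_normal (Gn n) H))
  have hE_nz : ∀ n, (Gn n ⊔ N).relIndex H ≠ 0 := fun n =>
    left_ne_zero_of_mul (hRel n ▸ hRelH_nz n)
  -- basic log facts
  have hone : ∀ k : ℕ, k ≠ 0 → (1:ℝ) ≤ (k : ℝ) := fun k hk => by
    exact_mod_cast Nat.one_le_iff_ne_zero.mpr hk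
  have hlog : ∀ k : ℕ, k ≠ 0 → 0 ≤ Real.log (k : ℝ) := fun k hk =>
    Real.log_nonneg (hone k hk)
  have hlog_le : ∀ j k : ℕ, j ≠ 0 → j ∣ k → k ≠ 0 → Real.log (j : ℝ) ≤ Real.log (k : ℝ) :=
    fun j k hj hjk hk => Real.log_le_log (by exact_mod_cast Nat.pos_of_ne_zero hj)
      (by exact_mod_cast Nat.le_of_dvd (Nat.pos_of_ne_zero hk) hjk)
  -- the three sequences
  set a : ℕ → ℝ :=
    fun n => Real.log ((Gn n).relIndex N : ℝ) / Real.log ((Gn n).index : ℝ) with ha_def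
  set r : ℕ → ℝ :=
    fun n => Real.log ((Gn n ⊔ N).relIndex H : ℝ) / Real.log ((Gn n ⊔ N).index : ℝ) with hr_def
  -- splitting of logs
  have hBsplit : ∀ n, Real.log ((Gn n).index : ℝ)
      = Real.log ((Gn n ⊔ N).index : ℝ) + Real.log ((Gn n).relIndex N : ℝ) := fun n => by
    rw [hIdx n]
    push_cast
    exact Real.log_mul (by exact_mod_cast hD_nz n) (by exact_mod_cast hA_nz n)
  have hCsplit : ∀ n, Real.log ((Gn n).relIndex H : ℝ)
      = Real.log ((Gn n ⊔ N).relIndex H : ℝ) + Real.log ((Gn n).relIndex N : ℝ) := fun n => by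
    rw [hRel n]
    push_cast
    exact Real.log_mul (by exact_mod_cast hE_nz n) (by exact_mod_cast hA_nz n)
  have hED : ∀ n, Real.log ((Gn n ⊔ N).relIndex H : ℝ) ≤ Real.log ((Gn n ⊔ N).index : ℝ) :=
    fun n => by
      haveI := hnorm n
      exact hlog_le _ _ (hE_nz n) (Subgroup.relIndex_dvd_index_of_normal (Gn n ⊔ N) H)
        (hD_nz n)
  have hAB : ∀ n, Real.log ((Gn n).relIndex N : ℝ) ≤ Real.log ((Gn n).index : ℝ) := fun n => by
    haveI := hnorm n
    exact hlog_le _ _ (hA_nz n) (Subgroup.relIndex_dvd_index_of_normal (Gn n) N) (hfin n)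
  -- bounds
  have hr0 : ∀ n, 0 ≤ r n := fun n => div_nonneg (hlog _ (hE_nz n)) (hlog _ (hD_nz n))
  have hr1 : ∀ n, r n ≤ 1 := fun n => div_le_one_of_le₀ (hED n) (hlog _ (hD_nz n))
  have ha0 : ∀ n, 0 ≤ a n := fun n => div_nonneg (hlog _ (hA_nz n)) (hlog _ (hfin n))
  have ha1 : ∀ n, a n ≤ 1 := fun n => div_le_one_of_le₀ (hAB n) (hlog _ (hfin n))
  -- identification of the quotient Hausdorff dimension
  have hq : hdimFil (fun n => (Gn n).map (QuotientGroup.mk' N)) (H.map (QuotientGroup.mk' N))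
      = atTop.liminf r := by
    unfold hdimFil
    congr 1
    funext n
    rw [myRelindex_map_quot, myIndex_map_quot]
  -- the pointwise identity
  have hmain : hdimFil Gn H = atTop.liminf (fun n => r n * (1 - a n) + a n) := by
    unfold hdimFil
    congr 1
    funext n
    simp only [hr_def, ha_def]
    rw [hCsplit n, hBsplit n]
    exact myRatio _ _ _ (hlog _ (hA_nz n)) (hlog _ (hE_nz n)) (hlog _ (hD_nz n)) (hED n)
  rw [hmain, hq]
  exact myLiminf_affine r a (hdimFil Gn N) hr0 hr1 ha0 ha1 hNproper
end

section
/- Let G be a countably based profinite group with normal filtration series {G_n}, let H be a closed subgroup of G whose Hausdorff dimension with respect to {G_n} is given by a proper limit. Then for every closed subgroup K of H, hdim^G(K) = hdim^G(H) · hdim^H(K), where hdim^H(K) is the Hausdorff dimension of K in H computed with respect to the filtration {H ∩ G_n}. -/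
open Filter

theorem hausdorff_dimension_multiplicative
    {G : Type*} [Group G] [TopologicalSpace G] [IsTopologicalGroup G] [CompactSpace G]
    [TotallyDisconnectedSpace G] [T2Space G] [SecondCountableTopology G]
    (Gn : ℕ → Subgroup G)
    (hopen : ∀ n, IsOpen (Gn n : Set G)) (hnorm : ∀ n, (Gn n).Normal)
    (hdesc : ∀ n, Gn (n + 1) ≤ Gn n) (hinter : ⨅ n, Gn n = ⊥)
    (H : Subgroup G) (hHclosed : IsClosed (H : Set G))
    (hHproper : Filter.Tendsto
      (fun n => Real.log ((Gn n).relIndex H : ℝ) / Real.log ((Gn n).index : ℝ))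
      Filter.atTop (nhds (hdimFil Gn H)))
    (K : Subgroup G) (hKH : K ≤ H) (hKclosed : IsClosed (K : Set G)) :
    hdimFil Gn K =
      hdimFil Gn H * hdimFil (fun n => (Gn n).subgroupOf H) (K.subgroupOf H) := by
  classical
  -- basic notation
  set a : ℕ → ℝ := fun n => Real.log ((Gn n).relIndex K : ℝ) with ha
  set b : ℕ → ℝ := fun n => Real.log ((Gn n).relIndex H : ℝ) with hb
  set c : ℕ → ℝ := fun n => Real.log ((Gn n).index : ℝ) with hc
  set u : ℕ → ℝ := fun n => b n / c n with hu
  set v : ℕ → ℝ := fun n => a n / b n with hv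
  -- finiteness facts
  have hfin : ∀ n, (Gn n).index ≠ 0 := fun n => by
    have : Finite (G ⧸ Gn n) := Subgroup.quotient_finite_of_isOpen (Gn n) (hopen n)
    exact Subgroup.index_ne_zero_of_finite
  have hrelH : ∀ n, (Gn n).relIndex H ≠ 0 := fun n => by
    intro h0
    have := hnorm n
    exact hfin n (zero_dvd_iff.mp (h0 ▸ Subgroup.relIndex_dvd_index_of_normal (Gn n) H))
  have hdvd : ∀ n, (Gn n).relIndex K ∣ (Gn n).relIndex H := fun n => by
    have hN : ((Gn n).subgroupOf H).Normal := (hnorm n).subgroupOf H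
    have := Subgroup.relIndex_dvd_index_of_normal ((Gn n).subgroupOf H) (K.subgroupOf H)
    rwa [Subgroup.relIndex_subgroupOf hKH] at this
  have hrelK : ∀ n, (Gn n).relIndex K ≠ 0 := fun n => fun h0 =>
    hrelH n (zero_dvd_iff.mp (h0 ▸ hdvd n))
  have hb0 : ∀ n, 0 ≤ b n := fun n => Real.log_natCast_nonneg _
  have ha0 : ∀ n, 0 ≤ a n := fun n => Real.log_natCast_nonneg _
  have hab : ∀ n, a n ≤ b n := fun n => by
    apply Real.log_le_log
    · exact_mod_cast Nat.pos_of_ne_zero (hrelK n)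
    · exact_mod_cast Nat.le_of_dvd (Nat.pos_of_ne_zero (hrelH n)) (hdvd n)
  -- if b n = 0 then a n = 0
  have hbza : ∀ n, b n = 0 → a n = 0 := fun n hbn =>
    le_antisymm (hbn ▸ hab n) (ha0 n)
  -- pointwise factorization
  have hfact : (fun n => a n / c n) = u * v := by
    funext n
    show a n / c n = (b n / c n) * (a n / b n)
    by_cases hbn : b n = 0
    · rw [hbza n hbn, hbn]; simp
    · rw [div_mul_div_comm, mul_comm (c n) (b n), mul_comm (b n) (a n), mul_comm (a n) (b n),
        mul_div_mul_left _ _ hbn]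
  -- bounds on u and v
  have hv0 : ∀ n, 0 ≤ v n := fun n => div_nonneg (ha0 n) (hb0 n)
  have hv1 : ∀ n, v n ≤ 1 := fun n => div_le_one_of_le₀ (hab n) (hb0 n)
  have hu0 : ∀ n, 0 ≤ u n := fun n => div_nonneg (hb0 n) (Real.log_natCast_nonneg _)
  -- liminf/limsup of u
  have hulim : atTop.liminf u = hdimFil Gn H := hHproper.liminf_eq
  have husup : atTop.limsup u = hdimFil Gn H := hHproper.limsup_eq
  -- identify the H-relative dimension with liminf v
  have hrhs : hdimFil (fun n => (Gn n).subgroupOf H) (K.subgroupOf H) = atTop.liminf v := by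
    unfold hdimFil
    congr 1
    funext n
    show Real.log (((Gn n).subgroupOf H).relIndex (K.subgroupOf H) : ℝ) /
        Real.log (((Gn n).subgroupOf H).index : ℝ) = a n / b n
    rw [Subgroup.relIndex_subgroupOf hKH]
    rfl
  -- boundedness hypotheses
  have h1 : (0 : ℕ → ℝ) ≤ᶠ[atTop] u := Eventually.of_forall hu0
  have h2 : atTop.IsBoundedUnder (· ≤ ·) u := hHproper.isBoundedUnder_le
  have h3 : (0 : ℕ → ℝ) ≤ᶠ[atTop] v := Eventually.of_forall hv0
  have hvb : atTop.IsBoundedUnder (· ≤ ·) v := isBoundedUnder_of_eventually_le (a := 1) (Eventually.of_forall hv1)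
  have h4 : atTop.IsCoboundedUnder (· ≥ ·) v := hvb.isCoboundedUnder_ge
  have hle : atTop.liminf u * atTop.liminf v ≤ atTop.liminf (u * v) :=
    le_liminf_mul h1 h2 h3 h4
  have hge : atTop.liminf (u * v) ≤ atTop.limsup u * atTop.liminf v :=
    liminf_mul_le h1 h2 h3 h4
  have hmain : atTop.liminf (u * v) = hdimFil Gn H * atTop.liminf v := by
    refine le_antisymm ?_ ?_
    · calc atTop.liminf (u * v) ≤ atTop.limsup u * atTop.liminf v := hge
        _ = hdimFil Gn H * atTop.liminf v := by rw [husup]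
    · calc hdimFil Gn H * atTop.liminf v = atTop.liminf u * atTop.liminf v := by rw [hulim]
        _ ≤ atTop.liminf (u * v) := hle
  have hlhs : hdimFil Gn K = atTop.liminf (u * v) := by
    unfold hdimFil
    rw [← hfact]
  rw [hlhs, hmain, hrhs]
end

section
/- Let G be a countably based profinite group with normal filtration series {G_n}, and let N ⊴ K ≤ G be closed subgroups such that hdim(N) = η and hdim(K) = κ are given by proper limits. If the Hausdorff spectrum of K/N with respect to the filtration {(K ∩ G_n)N/N} equals the full interval [0,1], then the closed interval [η, κ] is contained in the Hausdorff spectrum of G with respect to {G_n}. -/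
open Filter Subgroup

lemma ev_abs {a : ℕ → ℝ} {η δ : ℝ} (ha : Tendsto a atTop (nhds η)) (hδ : 0 < δ) :
    ∀ᶠ n in atTop, |a n - η| < δ := by
  obtain ⟨M, hM⟩ := Metric.tendsto_atTop.mp ha δ hδ
  exact eventually_atTop.mpr ⟨M, fun n hn => by simpa [Real.dist_eq] using hM n hn⟩

lemma liminf_aux (a b c : ℕ → ℝ) (η γ s : ℝ)
    (ha : Tendsto a atTop (nhds η)) (hc : Tendsto c atTop (nhds γ))
    (hγ : 0 < γ) (hb0 : ∀ n, 0 ≤ b n) (hb1 : ∀ n, b n ≤ 1)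
    (hbs : atTop.liminf b = s) :
    atTop.liminf (fun n => a n + b n * c n) = η + s * γ := by
  have hbddb_le : IsBoundedUnder (· ≤ ·) atTop b :=
    isBoundedUnder_of_eventually_le (Eventually.of_forall hb1)
  have hbddb_ge : IsBoundedUnder (· ≥ ·) atTop b :=
    isBoundedUnder_of_eventually_ge (Eventually.of_forall hb0)
  have hs0 : 0 ≤ s := hbs ▸ le_liminf_of_le hbddb_le.isCoboundedUnder_ge
    (Eventually.of_forall hb0)
  have hs1 : s ≤ 1 := hbs ▸ liminf_le_of_frequently_le
    (Frequently.of_forall hb1) hbddb_ge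
  set f : ℕ → ℝ := fun n => a n + b n * c n with hf
  -- boundedness of f
  have hfub : ∀ᶠ n in atTop, f n ≤ (η + 1) + (γ + 1) := by
    filter_upwards [ev_abs ha one_pos, ev_abs hc one_pos] with n h1 h2
    have := abs_lt.mp h1; have := abs_lt.mp h2
    have hb0n := hb0 n; have hb1n := hb1 n
    have : b n * c n ≤ γ + 1 := by nlinarith
    simp only [hf]; linarith [abs_lt.mp h1]
  have hflb : ∀ᶠ n in atTop, (η - 1) + 0 ≤ f n := by
    filter_upwards [ev_abs ha one_pos, ev_abs hc (half_pos hγ)] with n h1 h2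
    have h1' := abs_lt.mp h1; have h2' := abs_lt.mp h2
    have hb0n := hb0 n
    have hcpos : 0 ≤ c n := by linarith
    have : 0 ≤ b n * c n := mul_nonneg hb0n hcpos
    simp only [hf]; linarith
  have hfbdd_ge : IsBoundedUnder (· ≥ ·) atTop f := isBoundedUnder_of_eventually_ge hflb
  have hfbdd_le : IsBoundedUnder (· ≤ ·) atTop f := isBoundedUnder_of_eventually_le hfub
  set r := η + s * γ with hr
  have key : ∀ ε : ℝ, 0 < ε → r - ε ≤ atTop.liminf f ∧ atTop.liminf f ≤ r + ε := by
    intro ε hε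
    set δ := min 1 (min (γ / 2) (ε / (3 + γ))) with hδdef
    have hδpos : 0 < δ := by
      refine lt_min one_pos (lt_min (half_pos hγ) (div_pos hε (by linarith)))
    have hδ1 : δ ≤ 1 := min_le_left _ _
    have hδγ : δ ≤ γ / 2 := le_trans (min_le_right _ _) (min_le_left _ _)
    have hδε : δ * (3 + γ) ≤ ε := by
      have h3 : (0:ℝ) < 3 + γ := by linarith
      have : δ ≤ ε / (3 + γ) := le_trans (min_le_right 1 _) (min_le_right (γ/2) _)
      calc δ * (3 + γ) ≤ ε / (3 + γ) * (3 + γ) := by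
            exact mul_le_mul_of_nonneg_right this (le_of_lt h3)
        _ = ε := div_mul_cancel₀ ε (ne_of_gt h3)
    constructor
    · -- lower bound
      have hev : ∀ᶠ n in atTop, r - ε ≤ f n := by
        have hbev : ∀ᶠ n in atTop, s - δ < b n := by
          apply eventually_lt_of_lt_liminf _ hbddb_ge
          rw [hbs]; linarith
        filter_upwards [ev_abs ha hδpos, ev_abs hc hδpos, hbev] with n h1 h2 h3
        have h1' := abs_lt.mp h1; have h2' := abs_lt.mp h2
        have hb0n := hb0 n; have hb1n := hb1 n
        have hcpos : 0 ≤ c n := by linarith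
        have hbc : (s - δ) * c n ≤ b n * c n :=
          mul_le_mul_of_nonneg_right (le_of_lt h3) hcpos
        have : s * γ - δ * (2 + γ) ≤ (s - δ) * c n := by nlinarith
        simp only [hf, hr]
        nlinarith
      exact le_liminf_of_le hfbdd_le.isCoboundedUnder_ge hev
    · -- upper bound
      have hfreq : ∃ᶠ n in atTop, b n < s + δ := by
        apply frequently_lt_of_liminf_lt hbddb_le.isCoboundedUnder_ge
        rw [hbs]; linarith
      have hev : ∃ᶠ n in atTop, f n ≤ r + ε := by
        refine (hfreq.and_eventually ((ev_abs ha hδpos).and (ev_abs hc hδpos))).mono ?_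
        rintro n ⟨h3, h1, h2⟩
        have h1' := abs_lt.mp h1; have h2' := abs_lt.mp h2
        have hb0n := hb0 n; have hb1n := hb1 n
        have hbc : b n * c n ≤ (s + δ) * (γ + δ) := by nlinarith
        simp only [hf, hr]
        nlinarith
      exact liminf_le_of_frequently_le hev hfbdd_ge
  have h1 : r ≤ atTop.liminf f := by
    by_contra h
    push_neg at h
    obtain ⟨ε, hε, hlt⟩ : ∃ ε > 0, atTop.liminf f < r - ε :=
      ⟨(r - atTop.liminf f)/2, by linarith, by linarith⟩
    exact absurd ((key ε hε).1) (by linarith)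
  have h2 : atTop.liminf f ≤ r := by
    by_contra h
    push_neg at h
    obtain ⟨ε, hε, hlt⟩ : ∃ ε > 0, r + ε < atTop.liminf f :=
      ⟨(atTop.liminf f - r)/2, by linarith, by linarith⟩
    exact absurd ((key ε hε).2) (by linarith)
  linarith

section PerN
variable {G : Type*} [Group G]

lemma key_relIndex (Γ N K : Subgroup G) [Γ.Normal] (hNK : N ≤ K) [(N.subgroupOf K).Normal]
    (L : Subgroup (K ⧸ N.subgroupOf K)) :
    Γ.relIndex ((L.comap (QuotientGroup.mk' (N.subgroupOf K))).map K.subtype)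
      = Γ.relIndex N
        * (((Γ.subgroupOf K).map (QuotientGroup.mk' (N.subgroupOf K))).relIndex L) := by
  set N' := N.subgroupOf K with hN'
  set π := QuotientGroup.mk' N' with hπ
  set Γ' := Γ.subgroupOf K with hΓ'
  set H' := L.comap π with hH'
  set M := (Γ' ⊔ N') ⊓ H' with hM
  have hkerπ : π.ker = N' := QuotientGroup.ker_mk' N'
  have hN'H' : N' ≤ H' := by
    rw [← hkerπ]
    intro x hx
    exact mem_comap.mpr (by rw [MonoidHom.mem_ker.mp hx]; exact L.one_mem)
  have hBM : Γ' ⊓ H' ≤ M := le_inf (inf_le_left.trans le_sup_left) inf_le_right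
  have hMH' : M ≤ H' := inf_le_right
  have h1 : Γ.relIndex (H'.map K.subtype) = Γ'.relIndex H' :=
    (relIndex_comap (H := Γ) K.subtype H').symm
  have hΓM : Γ' ⊓ M = Γ' ⊓ H' := by
    rw [hM, ← inf_assoc, inf_eq_left.mpr (le_sup_left : Γ' ≤ Γ' ⊔ N')]
  have hsup : Γ' ⊔ M = Γ' ⊔ N' := by
    refine le_antisymm (sup_le le_sup_left inf_le_left) (sup_le le_sup_left ?_)
    exact le_trans (le_inf le_sup_right hN'H') le_sup_right
  have h2 : (Γ' ⊔ N').relIndex H' = ((Γ'.map π).relIndex L) := by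
    have := relIndex_comap (Γ'.map π) π H'
    rw [comap_map_eq, hkerπ] at this
    rw [this, hH', map_comap_eq_self_of_surjective (QuotientGroup.mk'_surjective N')]
  have h3 : (Γ' ⊓ H').relIndex M = Γ.relIndex N := by
    rw [← hΓM, inf_relIndex_right, ← relIndex_sup_left, hsup, relIndex_sup_left,
      relIndex_subgroupOf hNK]
  calc Γ.relIndex (H'.map K.subtype) = Γ'.relIndex H' := h1
    _ = (Γ' ⊓ H').relIndex H' := (inf_relIndex_right _ _).symm
    _ = (Γ' ⊓ H').relIndex M * M.relIndex H' :=
        (relIndex_mul_relIndex _ _ _ hBM hMH').symm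
    _ = Γ.relIndex N * M.relIndex H' := by rw [h3]
    _ = Γ.relIndex N * ((Γ'.map π).relIndex L) := by
        rw [hM, inf_relIndex_right, h2]

lemma key_index (Γ N K : Subgroup G) [Γ.Normal] (hNK : N ≤ K) [(N.subgroupOf K).Normal] :
    Γ.relIndex N * ((Γ.subgroupOf K).map (QuotientGroup.mk' (N.subgroupOf K))).index
      = Γ.relIndex K := by
  set N' := N.subgroupOf K with hN'
  set π := QuotientGroup.mk' N' with hπ
  set Γ' := Γ.subgroupOf K with hΓ'
  have hkerπ : π.ker = N' := QuotientGroup.ker_mk' N'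
  have hiQ : (Γ'.map π).index = (Γ' ⊔ N').index := by
    have := index_map (f := π) (H := Γ')
    rw [hkerπ, MonoidHom.range_eq_top_of_surjective π (QuotientGroup.mk'_surjective N'),
      index_top, mul_one] at this
    exact this
  have h4 : Γ'.relIndex (Γ' ⊔ N') * (Γ' ⊔ N').index = Γ'.index :=
    relIndex_mul_index le_sup_left
  rw [hiQ, ← relIndex_subgroupOf hNK, ← relIndex_sup_left, h4]
  rfl

lemma per_n (Γ N K : Subgroup G) [Γ.Normal] (hNK : N ≤ K) [(N.subgroupOf K).Normal]
    (L : Subgroup (K ⧸ N.subgroupOf K)) (hi : Γ.index ≠ 0) :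
    (0 ≤ Real.log ((((Γ.subgroupOf K).map (QuotientGroup.mk' (N.subgroupOf K))).relIndex L : ℕ) : ℝ)
        / Real.log ((((Γ.subgroupOf K).map (QuotientGroup.mk' (N.subgroupOf K))).index : ℕ) : ℝ)) ∧
    (Real.log ((((Γ.subgroupOf K).map (QuotientGroup.mk' (N.subgroupOf K))).relIndex L : ℕ) : ℝ)
        / Real.log ((((Γ.subgroupOf K).map (QuotientGroup.mk' (N.subgroupOf K))).index : ℕ) : ℝ) ≤ 1) ∧
    (Real.log ((Γ.relIndex ((L.comap (QuotientGroup.mk' (N.subgroupOf K))).map K.subtype) : ℕ) : ℝ)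
        / Real.log ((Γ.index : ℕ) : ℝ)
      = Real.log ((Γ.relIndex N : ℕ) : ℝ) / Real.log ((Γ.index : ℕ) : ℝ)
        + (Real.log ((((Γ.subgroupOf K).map (QuotientGroup.mk' (N.subgroupOf K))).relIndex L : ℕ) : ℝ)
            / Real.log ((((Γ.subgroupOf K).map (QuotientGroup.mk' (N.subgroupOf K))).index : ℕ) : ℝ))
          * (Real.log ((Γ.relIndex K : ℕ) : ℝ) / Real.log ((Γ.index : ℕ) : ℝ)
              - Real.log ((Γ.relIndex N : ℕ) : ℝ) / Real.log ((Γ.index : ℕ) : ℝ))) := by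
  set N' := N.subgroupOf K
  set π := QuotientGroup.mk' N'
  set Q := (Γ.subgroupOf K).map π with hQ
  haveI hQnorm : Q.Normal :=
    Subgroup.Normal.map (Subgroup.normal_subgroupOf) π (QuotientGroup.mk'_surjective N')
  set rN := Γ.relIndex N
  set rK := Γ.relIndex K
  set rL := Q.relIndex L
  set iQ := Q.index
  have hrN_dvd : rN ∣ Γ.index := relIndex_dvd_index_of_normal Γ N
  have hrK_dvd : rK ∣ Γ.index := relIndex_dvd_index_of_normal Γ K
  have hrN0 : rN ≠ 0 := fun h => hi (zero_dvd_iff.mp (h ▸ hrN_dvd))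
  have hrK0 : rK ≠ 0 := fun h => hi (zero_dvd_iff.mp (h ▸ hrK_dvd))
  have hkey : rN * iQ = rK := key_index Γ N K hNK
  have hiQ0 : iQ ≠ 0 := fun h => hrK0 (by rw [← hkey, h, mul_zero])
  have hrL_dvd : rL ∣ iQ := relIndex_dvd_index_of_normal Q L
  have hrL0 : rL ≠ 0 := fun h => hiQ0 (zero_dvd_iff.mp (h ▸ hrL_dvd))
  have hrel : Γ.relIndex ((L.comap π).map K.subtype) = rN * rL := key_relIndex Γ N K hNK L
  -- real log facts
  have cast1 : ∀ m : ℕ, m ≠ 0 → (1:ℝ) ≤ (m:ℝ) := fun m hm =>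
    Nat.one_le_cast.mpr (Nat.one_le_iff_ne_zero.mpr hm)
  have lrN0 : 0 ≤ Real.log (rN:ℝ) := Real.log_nonneg (cast1 _ hrN0)
  have lrL0 : 0 ≤ Real.log (rL:ℝ) := Real.log_nonneg (cast1 _ hrL0)
  have liQ0 : 0 ≤ Real.log (iQ:ℝ) := Real.log_nonneg (cast1 _ hiQ0)
  have hlogle : Real.log (rL:ℝ) ≤ Real.log (iQ:ℝ) :=
    Real.log_le_log (by exact_mod_cast Nat.pos_of_ne_zero hrL0)
      (Nat.cast_le.mpr (Nat.le_of_dvd (Nat.pos_of_ne_zero hiQ0) hrL_dvd))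
  have hb0 : 0 ≤ Real.log (rL:ℝ) / Real.log (iQ:ℝ) := div_nonneg lrL0 liQ0
  have hb1 : Real.log (rL:ℝ) / Real.log (iQ:ℝ) ≤ 1 := by
    by_cases hy : Real.log (iQ:ℝ) = 0
    · simp [hy]
    · exact (div_le_one (lt_of_le_of_ne liQ0 (Ne.symm hy))).mpr hlogle
  refine ⟨hb0, hb1, ?_⟩
  have hlogmul : Real.log ((rN * rL : ℕ) : ℝ) = Real.log (rN:ℝ) + Real.log (rL:ℝ) := by
    push_cast
    exact Real.log_mul (Nat.cast_ne_zero.mpr hrN0) (Nat.cast_ne_zero.mpr hrL0)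
  have hlogK : Real.log (rK:ℝ) = Real.log (rN:ℝ) + Real.log (iQ:ℝ) := by
    rw [← hkey]; push_cast
    exact Real.log_mul (Nat.cast_ne_zero.mpr hrN0) (Nat.cast_ne_zero.mpr hiQ0)
  rw [hrel, hlogmul, hlogK]
  by_cases hx : Real.log ((Γ.index : ℕ) : ℝ) = 0
  · simp [hx]
  · by_cases hy : Real.log (iQ:ℝ) = 0
    · have hiQ1 : iQ = 1 := by
        have := Real.log_eq_zero.mp hy
        rcases this with h | h | h
        · exact absurd h (Nat.cast_ne_zero.mpr hiQ0)
        · exact_mod_cast h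
        · exfalso; have := cast1 _ hiQ0; rw [h] at this; linarith
      have hrL1 : rL = 1 := Nat.dvd_one.mp (hiQ1 ▸ hrL_dvd)
      rw [hrL1, hy]
      simp
    · field_simp
      ring
end PerN

open Filter

/-- The Hausdorff spectrum with respect to a filtration series: the set of Hausdorff
dimensions of closed subgroups. -/
noncomputable def hspecFil (G : Type*) [Group G] [TopologicalSpace G]
    (Gn : ℕ → Subgroup G) : Set ℝ :=
  {r : ℝ | ∃ H : Subgroup G, IsClosed (H : Set G) ∧ hdimFil Gn H = r}

theorem interval_in_hausdorff_spectrum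
    {G : Type*} [Group G] [TopologicalSpace G] [IsTopologicalGroup G] [CompactSpace G]
    [TotallyDisconnectedSpace G] [T2Space G] [SecondCountableTopology G]
    (Gn : ℕ → Subgroup G)
    (hopen : ∀ n, IsOpen (Gn n : Set G)) (hnorm : ∀ n, (Gn n).Normal)
    (hdesc : ∀ n, Gn (n + 1) ≤ Gn n) (hinter : ⨅ n, Gn n = ⊥)
    (N K : Subgroup G) (hNK : N ≤ K) [(N.subgroupOf K).Normal]
    (hNclosed : IsClosed (N : Set G)) (hKclosed : IsClosed (K : Set G))
    (η κ : ℝ) (hη : hdimFil Gn N = η) (hκ : hdimFil Gn K = κ)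
    (hNproper : Filter.Tendsto
      (fun n => Real.log ((Gn n).relIndex N : ℝ) / Real.log ((Gn n).index : ℝ))
      Filter.atTop (nhds η))
    (hKproper : Filter.Tendsto
      (fun n => Real.log ((Gn n).relIndex K : ℝ) / Real.log ((Gn n).index : ℝ))
      Filter.atTop (nhds κ))
    (hfull : hspecFil (K ⧸ N.subgroupOf K)
        (fun n => ((Gn n).subgroupOf K).map (QuotientGroup.mk' (N.subgroupOf K)))
      = Set.Icc (0 : ℝ) 1) :
    Set.Icc η κ ⊆ hspecFil G Gn := by
  intro r hr
  by_cases hcase : κ ≤ η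
  · have hrη : r = η := le_antisymm (le_trans hr.2 hcase) hr.1
    exact ⟨N, hNclosed, hrη ▸ hη⟩
  · push_neg at hcase
    have hκη : (0:ℝ) < κ - η := by linarith
    set s := (r - η) / (κ - η) with hs
    have hsmem : s ∈ Set.Icc (0:ℝ) 1 :=
      ⟨div_nonneg (by linarith [hr.1]) hκη.le, (div_le_one hκη).mpr (by linarith [hr.2])⟩
    rw [← hfull] at hsmem
    obtain ⟨L, hLclosed, hLdim⟩ := hsmem
    have hi : ∀ n, (Gn n).index ≠ 0 := fun n => by
      haveI : Finite (G ⧸ Gn n) := Subgroup.quotient_finite_of_isOpen (Gn n) (hopen n)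
      haveI : (Gn n).FiniteIndex := Subgroup.finiteIndex_of_finite_quotient
      exact Subgroup.FiniteIndex.index_ne_zero
    refine ⟨(L.comap (QuotientGroup.mk' (N.subgroupOf K))).map K.subtype, ?_, ?_⟩
    · haveI : CompactSpace K := isCompact_iff_compactSpace.mp hKclosed.isCompact
      have hπc : Continuous (QuotientGroup.mk' (N.subgroupOf K)) := QuotientGroup.continuous_mk
      have hc : IsClosed ((L.comap (QuotientGroup.mk' (N.subgroupOf K)) : Subgroup K) : Set K) := by
        rw [Subgroup.coe_comap]
        exact hLclosed.preimage hπc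
      rw [Subgroup.coe_map]
      exact (hc.isCompact.image continuous_subtype_val).isClosed
    · have hfacts := fun n => by
        haveI := hnorm n
        exact per_n (Gn n) N K hNK L (hi n)
      have hbliminf : atTop.liminf (fun n =>
          Real.log (((((Gn n).subgroupOf K).map (QuotientGroup.mk' (N.subgroupOf K))).relIndex L : ℕ) : ℝ)
            / Real.log (((((Gn n).subgroupOf K).map (QuotientGroup.mk' (N.subgroupOf K))).index : ℕ) : ℝ)) = s := hLdim
      have heq : (fun n => Real.log (((Gn n).relIndex
              ((L.comap (QuotientGroup.mk' (N.subgroupOf K))).map K.subtype) : ℕ) : ℝ)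
            / Real.log (((Gn n).index : ℕ) : ℝ))
          = fun n =>
            (Real.log (((Gn n).relIndex N : ℕ) : ℝ) / Real.log (((Gn n).index : ℕ) : ℝ))
            + (Real.log (((((Gn n).subgroupOf K).map (QuotientGroup.mk' (N.subgroupOf K))).relIndex L : ℕ) : ℝ)
                / Real.log (((((Gn n).subgroupOf K).map (QuotientGroup.mk' (N.subgroupOf K))).index : ℕ) : ℝ))
              * ((Real.log (((Gn n).relIndex K : ℕ) : ℝ) / Real.log (((Gn n).index : ℕ) : ℝ))
                - (Real.log (((Gn n).relIndex N : ℕ) : ℝ) / Real.log (((Gn n).index : ℕ) : ℝ))) := by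
        funext n
        exact (hfacts n).2.2
      have hmain : hdimFil Gn ((L.comap (QuotientGroup.mk' (N.subgroupOf K))).map K.subtype)
          = η + s * (κ - η) := by
        show atTop.liminf _ = _
        rw [heq]
        exact liminf_aux _ _ _ η (κ - η) s hNproper (hKproper.sub hNproper) hκη
          (fun n => (hfacts n).1) (fun n => (hfacts n).2.1) hbliminf
      rw [hmain, hs]
      field_simp
      ring
end

section
/- Let S be an R-standard group of dimension d over a pro-p domain R with maximal ideal m, i.e. S is identified via a homeomorphism φ with (m^N)^(d) and multiplication is given by a formal group law F over R, and let S_n = φ^{-1}((m^{N+n})^(d)). If R has characteristic p, then for every x ∈ S_n one has x^p ∈ S_{2n}; in particular S_n/S_{2n} is an elementary abelian p-group. -/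
open IsLocalRing

/-- Evaluation of a multivariate power series at a point, as a sum over all monomials
(convergent in the adic topology when the arguments lie in the maximal ideal). -/
noncomputable def fglEval {R : Type*} [CommRing R] [TopologicalSpace R] {σ : Type*}
    (F : MvPowerSeries σ R) (a : σ → R) : R :=
  ∑' m : σ →₀ ℕ, MvPowerSeries.coeff m F * m.prod fun i k => a i ^ k

open Filter Topology

private lemma aux_finite_deg {σ : Type*} [Finite σ] (n : ℕ) :
    {m : σ →₀ ℕ | (m.sum fun _ k => k) ≤ n}.Finite := by
  have hle : ∀ (m : σ →₀ ℕ) (i : σ), m i ≤ m.sum fun _ k => k := by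
    intro m i
    rw [Finsupp.sum]
    by_cases h : i ∈ m.support
    · exact Finset.single_le_sum (fun _ _ => Nat.zero_le _) h
    · simp [Finsupp.notMem_support_iff.mp h]
  refine Set.finite_coe_iff.mp ?_
  refine Finite.of_injective
    (fun m => (fun i => (⟨m.1 i, Nat.lt_succ_of_le (le_trans (hle m.1 i) m.2)⟩ : Fin (n+1)))) ?_
  intro m m' h
  ext i
  have := congrFun h i
  simpa using congrArg Fin.val this

private lemma aux_prod_mem {R : Type*} [CommRing R] (I : Ideal R) {σ : Type*}
    (s : Finset σ) (g : σ → R) (n : σ → ℕ) (h : ∀ j ∈ s, g j ∈ I ^ n j) :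
    ∏ j ∈ s, g j ∈ I ^ (∑ j ∈ s, n j) := by
  classical
  induction s using Finset.induction_on with
  | empty => simp [Ideal.one_eq_top]
  | insert _ _ hx ih =>
    rename_i a s
    rw [Finset.prod_insert hx, Finset.sum_insert hx, pow_add]
    exact Ideal.mul_mem_mul (h a (Finset.mem_insert_self a s))
      (ih fun j hj => h j (Finset.mem_insert_of_mem hj))

private lemma aux_key {R : Type*} [CommRing R] [IsLocalRing R]
    [IsAdicComplete (maximalIdeal R) R]
    [tR : TopologicalSpace R] (hadic : tR = (maximalIdeal R).adicTopology)
    {d : ℕ} (i : Fin d) (Fi : MvPowerSeries (Fin d ⊕ Fin d) R)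
    (hlinX : MvPowerSeries.coeff (Finsupp.single (Sum.inl i) 1) Fi = 1)
    (hlinY : MvPowerSeries.coeff (Finsupp.single (Sum.inr i) 1) Fi = 1)
    (hform : ∀ m, MvPowerSeries.coeff m Fi ≠ 0 →
      m = Finsupp.single (Sum.inl i) 1 ∨ m = Finsupp.single (Sum.inr i) 1 ∨
        ((∃ j, m (Sum.inl j) ≠ 0) ∧ (∃ j, m (Sum.inr j) ≠ 0) ∧ 2 ≤ m.sum fun _ k => k))
    (s t : ℕ) (hs : 1 ≤ s) (ht : 1 ≤ t) (a : Fin d ⊕ Fin d → R)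
    (ha1 : ∀ j, a (Sum.inl j) ∈ maximalIdeal R ^ s)
    (ha2 : ∀ j, a (Sum.inr j) ∈ maximalIdeal R ^ t) :
    fglEval Fi a - a (Sum.inl i) - a (Sum.inr i) ∈ maximalIdeal R ^ (s + t) := by
  subst hadic
  classical
  letI : TopologicalSpace R := (maximalIdeal R).adicTopology
  haveI : NonarchimedeanRing R := (maximalIdeal R).nonarchimedean
  letI : UniformSpace R := IsTopologicalAddGroup.rightUniformSpace R
  haveI : IsUniformAddGroup R := isUniformAddGroup_of_addCommGroup
  have hbz := (maximalIdeal R).hasBasis_nhds_zero_adic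
  haveI : T2Space R := by
    apply IsTopologicalAddGroup.t2Space_of_zero_sep
    intro x hx
    by_contra hc
    push_neg at hc
    refine hx (IsHausdorff.haus (inferInstance : IsHausdorff (maximalIdeal R) R) x fun k => ?_)
    rw [SModEq.zero, smul_eq_mul, Ideal.mul_top]
    exact hc _ (hbz.mem_of_mem (i := k) trivial)
  haveI : CompleteSpace R := by
    have hbu : (uniformity R).HasBasis (fun _ : ℕ => True)
        (fun k => {p : R × R | p.2 - p.1 ∈ maximalIdeal R ^ k}) := by
      rw [uniformity_eq_comap_nhds_zero]
      exact hbz.comap _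
    haveI : (uniformity R).IsCountablyGenerated := hbu.isCountablyGenerated
    apply UniformSpace.complete_of_cauchySeq_tendsto
    intro u hu
    have hc := hbu.cauchySeq_iff.mp hu
    choose K hK using fun k => hc k trivial
    set M : ℕ → ℕ := fun k => max ((Finset.range (k + 1)).sup K) k with hM
    have hMK : ∀ {a b : ℕ}, a ≤ b → K a ≤ M b := by
      intro a b hab
      exact le_trans (Finset.le_sup (Finset.mem_range.mpr (lt_of_le_of_lt hab (Nat.lt_succ_self b))))
        (le_max_left _ _)
    have hcau : ∀ {a b : ℕ}, a ≤ b →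
        u (M a) ≡ u (M b) [SMOD ((maximalIdeal R) ^ a • ⊤ : Submodule R R)] := by
      intro a b hab
      rw [SModEq.sub_mem, smul_eq_mul, Ideal.mul_top]
      exact hK a (M b) (hMK hab) (M a) (hMK le_rfl)
    obtain ⟨L, hL⟩ := IsPrecomplete.prec (inferInstanceAs (IsPrecomplete (maximalIdeal R) R))
      (fun {a b} h => hcau h)
    have hL' : Tendsto (fun k => u (M k)) atTop (nhds L) := by
      rw [← tendsto_sub_nhds_zero_iff]
      rw [hbz.tendsto_right_iff]
      intro k _
      filter_upwards [Filter.eventually_ge_atTop k] with b hb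
      have h1 : u (M b) - L ∈ maximalIdeal R ^ b := by
        have := hL b
        rwa [SModEq.sub_mem, smul_eq_mul, Ideal.mul_top] at this
      exact Ideal.pow_le_pow_right hb h1
    exact ⟨L, tendsto_nhds_of_cauchySeq_of_subseq hu
      (tendsto_atTop_mono (fun k => le_max_right _ k) tendsto_id) hL'⟩
  -- sum manipulation
  set f : ((Fin d ⊕ Fin d) →₀ ℕ) → R :=
    fun m => MvPowerSeries.coeff m Fi * m.prod fun j k => a j ^ k with hf
  have hfeq : fglEval Fi a = ∑' m, f m := rfl
  have haI : ∀ j, a j ∈ maximalIdeal R := by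
    intro j
    cases j with
    | inl j => exact Ideal.pow_le_self (Nat.one_le_iff_ne_zero.mp hs) (ha1 j)
    | inr j => exact Ideal.pow_le_self (Nat.one_le_iff_ne_zero.mp ht) (ha2 j)
  have hdeg : ∀ m, f m ∈ maximalIdeal R ^ (m.sum fun _ k => k) := by
    intro m
    apply Ideal.mul_mem_left
    rw [Finsupp.prod, Finsupp.sum]
    exact aux_prod_mem _ _ _ _ (fun j _ => Ideal.pow_mem_pow (haI j) _)
  have hten : Tendsto f cofinite (nhds 0) := by
    rw [hbz.tendsto_right_iff]
    intro k _
    rw [Filter.eventually_cofinite]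
    apply (aux_finite_deg k).subset
    intro m hm
    simp only [Set.mem_setOf_eq] at hm ⊢
    by_contra hdk
    push_neg at hdk
    exact hm (Ideal.pow_le_pow_right (le_of_lt hdk) (hdeg m))
  have hsum : Summable f := NonarchimedeanAddGroup.summable_of_tendsto_cofinite_zero hten
  set m1 : (Fin d ⊕ Fin d) →₀ ℕ := Finsupp.single (Sum.inl i) 1 with hm1def
  set m2 : (Fin d ⊕ Fin d) →₀ ℕ := Finsupp.single (Sum.inr i) 1 with hm2def
  have hm12 : m2 ≠ m1 := by
    intro h
    have := DFunLike.congr_fun h (Sum.inl i)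
    simp [hm1def, hm2def, Finsupp.single_apply] at this
  have hfm1 : f m1 = a (Sum.inl i) := by
    rw [hf]
    simp only [hm1def]
    rw [hlinX, one_mul, Finsupp.prod_single_index (by simp), pow_one]
  have h1 := Summable.tsum_eq_add_tsum_ite hsum m1
  set g : ((Fin d ⊕ Fin d) →₀ ℕ) → R := fun m => if m = m1 then 0 else f m with hg
  have hsumg : Summable g := by
    have : g = Function.update f m1 0 := by
      funext m; rw [Function.update_apply]
    rw [this]; exact hsum.update m1 0
  have hgm2 : g m2 = a (Sum.inr i) := by
    rw [hg]
    simp only [if_neg hm12]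
    rw [hf]
    simp only [hm2def]
    rw [hlinY, one_mul, Finsupp.prod_single_index (by simp), pow_one]
  have h2 := Summable.tsum_eq_add_tsum_ite hsumg m2
  set h : ((Fin d ⊕ Fin d) →₀ ℕ) → R := fun m => if m = m2 then 0 else g m with hh
  have hhmem : ∀ m, h m ∈ maximalIdeal R ^ (s + t) := by
    intro m
    rw [hh]
    simp only
    split
    · exact zero_mem _
    rw [hg]
    simp only
    split
    · exact zero_mem _
    rename_i hnm2 hnm1
    by_cases hc0 : MvPowerSeries.coeff m Fi = 0
    · rw [hf]; simp only [hc0, zero_mul]; exact zero_mem _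
    rcases hform m hc0 with h' | h' | ⟨⟨j1, hj1⟩, ⟨j2, hj2⟩, -⟩
    · exact absurd h' hnm1
    · exact absurd h' hnm2
    rw [hf]
    apply Ideal.mul_mem_left
    have hj1s : Sum.inl j1 ∈ m.support := Finsupp.mem_support_iff.mpr hj1
    have hj2s : Sum.inr j2 ∈ m.support.erase (Sum.inl j1) :=
      Finset.mem_erase.mpr ⟨by simp, Finsupp.mem_support_iff.mpr hj2⟩
    rw [Finsupp.prod, ← Finset.mul_prod_erase _ _ hj1s, ← Finset.mul_prod_erase _ _ hj2s,
      ← mul_assoc, pow_add]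
    apply Ideal.mul_mem_right
    apply Ideal.mul_mem_mul
    · obtain ⟨k, hk⟩ := Nat.exists_eq_succ_of_ne_zero hj1
      rw [hk, pow_succ]
      exact Ideal.mul_mem_left _ _ (ha1 j1)
    · obtain ⟨k, hk⟩ := Nat.exists_eq_succ_of_ne_zero hj2
      rw [hk, pow_succ]
      exact Ideal.mul_mem_left _ _ (ha2 j2)
  have hsumh : Summable h := by
    have : h = Function.update g m2 0 := by
      funext m; rw [Function.update_apply]
    rw [this]; exact hsumg.update m2 0
  have hth : (∑' m, h m) ∈ maximalIdeal R ^ (s + t) := by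
    have hcl : IsClosed ((maximalIdeal R ^ (s + t) : Ideal R) : Set R) :=
      ((maximalIdeal R).openAddSubgroup (s + t)).isClosed
    exact hcl.mem_of_tendsto hsumh.hasSum
      (Filter.Eventually.of_forall fun fs => Submodule.sum_mem _ fun m _ => hhmem m)
  have hfinal : fglEval Fi a = a (Sum.inl i) + (a (Sum.inr i) + ∑' m, h m) := by
    rw [hfeq, h1, hfm1, h2, hgm2]
  rw [hfinal]
  have : a (Sum.inl i) + (a (Sum.inr i) + ∑' m, h m) - a (Sum.inl i) - a (Sum.inr i)
      = ∑' m, h m := by ring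
  rw [this]
  exact hth

/-- In an `R`-standard group over a pro-`p` domain `R` of characteristic `p`, if
`x ∈ Sₙ` then `x ^ p ∈ S₂ₙ`; in particular `Sₙ / S₂ₙ` is an elementary abelian
`p`-group (commutators of elements of `Sₙ` also lie in `S₂ₙ`). -/
theorem standard_group_p_power_congruence
    {R : Type*} [CommRing R] [IsDomain R] [IsNoetherianRing R] [IsLocalRing R]
    [Finite (ResidueField R)] [IsAdicComplete (maximalIdeal R) R]
    [tR : TopologicalSpace R] (hadic : tR = (maximalIdeal R).adicTopology)
    (p : ℕ) [Fact p.Prime] [CharP R p]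
    (d : ℕ) (F : Fin d → MvPowerSeries (Fin d ⊕ Fin d) R)
    -- the formal group law has the form F(X,Y) = X + Y + G(X,Y)
    (hlinX : ∀ i, MvPowerSeries.coeff (Finsupp.single (Sum.inl i) 1) (F i) = 1)
    (hlinY : ∀ i, MvPowerSeries.coeff (Finsupp.single (Sum.inr i) 1) (F i) = 1)
    (hform : ∀ i m, MvPowerSeries.coeff m (F i) ≠ 0 →
      m = Finsupp.single (Sum.inl i) 1 ∨ m = Finsupp.single (Sum.inr i) 1 ∨
        ((∃ j, m (Sum.inl j) ≠ 0) ∧ (∃ j, m (Sum.inr j) ≠ 0) ∧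
          2 ≤ m.sum fun _ k => k))
    -- the standard group S of level N, identified with (m^N)^(d) via φ
    (S : Type*) [Group S] (N : ℕ) (hN : 1 ≤ N) (φ : S → Fin d → R)
    (hφinj : Function.Injective φ)
    (hφrange : ∀ x i, φ x i ∈ maximalIdeal R ^ N)
    (hφsurj : ∀ v : Fin d → R, (∀ i, v i ∈ maximalIdeal R ^ N) → ∃ x, φ x = v)
    (hφone : φ 1 = 0)
    (hmul : ∀ x y : S, ∀ i, φ (x * y) i = fglEval (F i) (Sum.elim (φ x) (φ y))) :
    ∀ n : ℕ, ∀ x : S, (∀ i, φ x i ∈ maximalIdeal R ^ (N + n)) →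
      (∀ i, φ (x ^ p) i ∈ maximalIdeal R ^ (N + 2 * n)) ∧
      ∀ y : S, (∀ i, φ y i ∈ maximalIdeal R ^ (N + n)) →
        ∀ i, φ (x * y * x⁻¹ * y⁻¹) i ∈ maximalIdeal R ^ (N + 2 * n) := by
  intro n
  have hB : ∀ (x y : S) (s t : ℕ), 1 ≤ s → 1 ≤ t →
      (∀ i, φ x i ∈ maximalIdeal R ^ s) → (∀ i, φ y i ∈ maximalIdeal R ^ t) →
      ∀ i, φ (x * y) i - φ x i - φ y i ∈ maximalIdeal R ^ (s + t) := by
    intro x y s t hs ht hxm hym i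
    rw [hmul]
    have := aux_key hadic i (F i) (hlinX i) (hlinY i) (hform i) s t hs ht
      (Sum.elim (φ x) (φ y)) (fun j => by simpa using hxm j) (fun j => by simpa using hym j)
    simpa using this
  have hle : ∀ {a b : ℕ}, a ≤ b → (maximalIdeal R) ^ b ≤ (maximalIdeal R) ^ a :=
    fun h => Ideal.pow_le_pow_right h
  have hN2 : (1:ℕ) ≤ N + n := le_trans hN (Nat.le_add_right N n)
  have hone : ∀ i, φ (1 : S) i = 0 := fun i => by rw [hφone]; rfl
  intro x hx
  have hinv : ∀ z : S, (∀ i, φ z i ∈ maximalIdeal R ^ (N + n)) →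
      (∀ i, φ z⁻¹ i ∈ maximalIdeal R ^ (N + n)) ∧
      (∀ i, φ z⁻¹ i + φ z i ∈ maximalIdeal R ^ (N + 2 * n)) := by
    intro z hz
    have hz1 : ∀ i, φ (z * z⁻¹) i = 0 := by
      intro i
      rw [mul_inv_cancel]
      exact hone i
    have h1 := hB z z⁻¹ (N + n) N hN2 hN hz (fun i => hφrange z⁻¹ i)
    have hmem : ∀ i, φ z⁻¹ i ∈ maximalIdeal R ^ (N + n) := by
      intro i
      have h2 := h1 i
      rw [hz1 i] at h2
      have he : φ z⁻¹ i = -(0 - φ z i - φ z⁻¹ i) - φ z i := by ring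
      rw [he]
      exact sub_mem (neg_mem (hle (by omega) h2)) (hz i)
    refine ⟨hmem, fun i => ?_⟩
    have h3 := hB z z⁻¹ (N + n) (N + n) hN2 hN2 hz hmem i
    rw [hz1 i] at h3
    have he : φ z⁻¹ i + φ z i = -(0 - φ z i - φ z⁻¹ i) := by ring
    rw [he]
    exact neg_mem (hle (by omega) h3)
  have hpow : ∀ k : ℕ, (∀ i, φ (x ^ k) i ∈ maximalIdeal R ^ (N + n)) ∧
      (∀ i, φ (x ^ k) i - (k : R) * φ x i ∈ maximalIdeal R ^ (N + 2 * n)) := by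
    intro k
    induction k with
    | zero =>
      constructor <;> intro i <;>
        simp only [pow_zero, hone, Nat.cast_zero, zero_mul, sub_zero] <;> exact zero_mem _
    | succ k ih =>
      obtain ⟨ih1, ih2⟩ := ih
      have h1 := hB (x ^ k) x (N + n) (N + n) hN2 hN2 ih1 hx
      have h1' : ∀ i, φ (x ^ (k + 1)) i - φ (x ^ k) i - φ x i
          ∈ maximalIdeal R ^ (N + n + (N + n)) := by
        intro i
        have := h1 i
        rwa [← pow_succ] at this
      constructor
      · intro i
        have he : φ (x ^ (k + 1)) i = (φ (x ^ (k + 1)) i - φ (x ^ k) i - φ x i)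
            + φ (x ^ k) i + φ x i := by ring
        rw [he]
        exact add_mem (add_mem (hle (by omega) (h1' i)) (ih1 i)) (hx i)
      · intro i
        have he : φ (x ^ (k + 1)) i - ((k + 1 : ℕ) : R) * φ x i =
            (φ (x ^ (k + 1)) i - φ (x ^ k) i - φ x i)
            + (φ (x ^ k) i - (k : R) * φ x i) := by push_cast; ring
        rw [he]
        exact add_mem (hle (by omega) (h1' i)) (ih2 i)
  constructor
  · intro i
    have h := (hpow p).2 i
    rwa [CharP.cast_eq_zero R p, zero_mul, sub_zero] at h
  · intro y hy i
    obtain ⟨hxinv, hxadd⟩ := hinv x hx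
    obtain ⟨hyinv, hyadd⟩ := hinv y hy
    have hxy : ∀ i, φ (x * y) i ∈ maximalIdeal R ^ (N + n) := by
      intro i
      have h := hB x y (N + n) (N + n) hN2 hN2 hx hy i
      have he : φ (x * y) i = (φ (x * y) i - φ x i - φ y i) + φ x i + φ y i := by ring
      rw [he]
      exact add_mem (add_mem (hle (by omega) h) (hx i)) (hy i)
    have hxyx : ∀ i, φ (x * y * x⁻¹) i ∈ maximalIdeal R ^ (N + n) := by
      intro i
      have h := hB (x * y) x⁻¹ (N + n) (N + n) hN2 hN2 hxy hxinv i
      have he : φ (x * y * x⁻¹) i = (φ (x * y * x⁻¹) i - φ (x * y) i - φ x⁻¹ i)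
          + φ (x * y) i + φ x⁻¹ i := by ring
      rw [he]
      exact add_mem (add_mem (hle (by omega) h) (hxy i)) (hxinv i)
    have e1 := hB (x * y * x⁻¹) y⁻¹ (N + n) (N + n) hN2 hN2 hxyx hyinv i
    have e2 := hB (x * y) x⁻¹ (N + n) (N + n) hN2 hN2 hxy hxinv i
    have e3 := hB x y (N + n) (N + n) hN2 hN2 hx hy i
    have key : φ (x * y * x⁻¹ * y⁻¹) i =
        (φ (x * y * x⁻¹ * y⁻¹) i - φ (x * y * x⁻¹) i - φ y⁻¹ i)
        + (φ (x * y * x⁻¹) i - φ (x * y) i - φ x⁻¹ i)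
        + (φ (x * y) i - φ x i - φ y i)
        + (φ x⁻¹ i + φ x i) + (φ y⁻¹ i + φ y i) := by ring
    rw [key]
    exact add_mem (add_mem (add_mem (add_mem (hle (by omega) e1) (hle (by omega) e2))
      (hle (by omega) e3)) (hxadd i)) (hyadd i)
end

section
/- Let R be a pro-p domain of characteristic p and let S be an abelian R-standard group of dimension d with standard filtration {S_n}. Then every topologically finitely generated closed subgroup H of S satisfies hdim_{S_n}(H) = 0, i.e. liminf_n log|H : H ∩ S_n| / log|S : S_n| = 0. -/
open IsLocalRing Filter Topology

lemma aux_degree_finite (d j : ℕ) :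
    Set.Finite {m : (Fin d ⊕ Fin d) →₀ ℕ | (m.sum fun _ k => k) < j} := by
  classical
  have h1 : Set.Finite {f : (Fin d ⊕ Fin d) → ℕ | ∀ a, f a ∈ Set.Iio j} := by
    simpa [Set.pi, Set.mem_univ] using
      Set.Finite.pi (fun _ : Fin d ⊕ Fin d => Set.finite_Iio j)
  have h2 : Set.Finite {m : (Fin d ⊕ Fin d) →₀ ℕ | ∀ a, m a < j} := by
    have : {m : (Fin d ⊕ Fin d) →₀ ℕ | ∀ a, m a < j}
        ⊆ (fun m : (Fin d ⊕ Fin d) →₀ ℕ => (m : (Fin d ⊕ Fin d) → ℕ)) ⁻¹'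
          {f | ∀ a, f a ∈ Set.Iio j} := fun m hm => hm
    exact Set.Finite.subset (Set.Finite.preimage
      (Set.injOn_of_injective (DFunLike.coe_injective)) h1) this
  refine h2.subset fun m hm a => lt_of_le_of_lt ?_ hm
  by_cases h : m a = 0
  · simp [h]
  · exact Finset.single_le_sum (f := fun i => m i) (fun _ _ => Nat.zero_le _)
      (Finsupp.mem_support_iff.mpr h)

lemma aux_term_mem {R : Type*} [CommRing R] (I : Ideal R) {σ : Type*} (v : σ → R)
    (hv : ∀ i, v i ∈ I) (m : σ →₀ ℕ) :
    (m.prod fun i k => v i ^ k) ∈ I ^ (m.sum fun _ k => k) := by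
  classical
  rw [Finsupp.prod, Finsupp.sum, ← Finset.prod_pow_eq_pow_sum]
  exact Ideal.prod_mem_prod fun i _ => Ideal.pow_mem_pow (hv i) _

open Filter in
lemma aux_fglEval_sub_mem {R : Type*} [CommRing R] (I : Ideal R) [IsAdicComplete I R]
    {d : ℕ} (G : MvPowerSeries (Fin d ⊕ Fin d) R) (i : Fin d)
    (hX : MvPowerSeries.coeff (Finsupp.single (Sum.inl i) 1) G = 1)
    (hY : MvPowerSeries.coeff (Finsupp.single (Sum.inr i) 1) G = 1)
    (hform : ∀ m, MvPowerSeries.coeff m G ≠ 0 →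
      m = Finsupp.single (Sum.inl i) 1 ∨ m = Finsupp.single (Sum.inr i) 1 ∨
        2 ≤ m.sum fun _ k => k)
    {M : ℕ} (hM : 1 ≤ M) (a b : Fin d → R) (ha : ∀ j, a j ∈ I ^ M)
    (hb : ∀ j, b j ∈ I ^ M) :
    @fglEval R _ I.adicTopology _ G (Sum.elim a b) - (a i + b i) ∈ I ^ (2 * M) := by
  classical
  letI : TopologicalSpace R := I.adicTopology
  set v : Fin d ⊕ Fin d → R := Sum.elim a b with hvdef
  have hv : ∀ s, v s ∈ I ^ M := by rintro (s | s) <;> simp [hvdef, ha s, hb s]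
  set g : ((Fin d ⊕ Fin d) →₀ ℕ) → R :=
    fun m => MvPowerSeries.coeff m G * m.prod fun s k => v s ^ k with hgdef
  have hdeg : ∀ m : (Fin d ⊕ Fin d) →₀ ℕ, g m ∈ I ^ (M * m.sum fun _ k => k) := by
    intro m
    have := aux_term_mem (I ^ M) v hv m
    rw [← pow_mul] at this
    exact Ideal.mul_mem_left _ _ this
  have hsmall : ∀ j (m : (Fin d ⊕ Fin d) →₀ ℕ), j ≤ (m.sum fun _ k => k) → g m ∈ I ^ j := by
    intro j m hj
    refine Ideal.pow_le_pow_right ?_ (hdeg m)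
    calc j ≤ (m.sum fun _ k => k) := hj
    _ = 1 * (m.sum fun _ k => k) := (one_mul _).symm
    _ ≤ M * (m.sum fun _ k => k) := Nat.mul_le_mul_right _ hM
  have hbig : ∀ m : (Fin d ⊕ Fin d) →₀ ℕ, 2 ≤ (m.sum fun _ k => k) → g m ∈ I ^ (2 * M) := by
    intro m hm
    refine Ideal.pow_le_pow_right ?_ (hdeg m)
    calc 2 * M ≤ (m.sum fun _ k => k) * M := Nat.mul_le_mul_right _ hm
    _ = M * (m.sum fun _ k => k) := Nat.mul_comm _ _
  set Sfin : ℕ → Finset ((Fin d ⊕ Fin d) →₀ ℕ) :=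
    fun j => (aux_degree_finite d j).toFinset with hSfin
  have hSmem : ∀ j m, m ∈ Sfin j ↔ (m.sum fun _ k => k) < j := by
    intro j m; simp [hSfin, Set.Finite.mem_toFinset]
  have hSmono : ∀ {j j'}, j ≤ j' → Sfin j ⊆ Sfin j' := by
    intro j j' h m hm
    rw [hSmem] at hm ⊢; omega
  set f : ℕ → R := fun j => ∑ m ∈ Sfin j, g m with hfdef
  have hsmultop : ∀ j : ℕ, (I ^ j • ⊤ : Submodule R R) = I ^ j := by
    intro j; rw [smul_eq_mul, Ideal.mul_top]
  have hdiff : ∀ {j} (s : Finset ((Fin d ⊕ Fin d) →₀ ℕ)), Sfin j ⊆ s →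
      (∑ m ∈ s, g m) - f j ∈ I ^ j := by
    intro j s hs
    rw [← Finset.sum_sdiff hs]
    simp only [hfdef, add_sub_cancel_right]
    refine Submodule.sum_mem _ fun m hm => ?_
    rw [Finset.mem_sdiff, hSmem] at hm
    exact hsmall j m (by omega)
  have hcauchy : ∀ {m n : ℕ}, m ≤ n → f m ≡ f n [SMOD (I ^ m • ⊤ : Submodule R R)] := by
    intro m n hmn
    rw [SModEq.sub_mem, hsmultop]
    have := hdiff (Sfin n) (hSmono hmn)
    have h2 : f m - f n = -((∑ m' ∈ Sfin n, g m') - f m) := by simp only [hfdef]; ring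
    rw [h2]
    exact neg_mem this
  obtain ⟨L, hL⟩ := IsPrecomplete.prec (IsAdicComplete.toIsPrecomplete (I := I) (M := R))
    (f := f) hcauchy
  have hLmem : ∀ j, f j - L ∈ I ^ j := by
    intro j
    have := hL j
    rwa [SModEq.sub_mem, hsmultop] at this
  have hhs : HasSum g L := by
    rw [HasSum, (I.hasBasis_nhds_adic L).tendsto_right_iff]
    intro n _
    refine eventually_atTop.2 ?_
    refine ⟨Sfin n, fun s hs => ?_⟩
    refine ⟨(∑ m ∈ s, g m) - L, ?_, by ring⟩
    have h1 := hdiff s hs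
    have h2 := hLmem n
    have : (∑ m ∈ s, g m) - L = ((∑ m ∈ s, g m) - f n) + (f n - L) := by ring
    rw [this]
    exact add_mem h1 h2
  have hsummable : Summable g := ⟨L, hhs⟩
  have hhs' : HasSum g (∑' m, g m) := hsummable.hasSum
  rw [HasSum, (I.hasBasis_nhds_adic (∑' m, g m)).tendsto_right_iff] at hhs'
  obtain ⟨s₀, hs₀⟩ := eventually_atTop.1 (hhs' (2 * M) trivial)
  set e1 : (Fin d ⊕ Fin d) →₀ ℕ := Finsupp.single (Sum.inl i) 1 with he1
  set e2 : (Fin d ⊕ Fin d) →₀ ℕ := Finsupp.single (Sum.inr i) 1 with he2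
  have he12 : e1 ≠ e2 := by
    intro h
    have := DFunLike.congr_fun h (Sum.inl i)
    simp [he1, he2, Finsupp.single_apply] at this
  set s : Finset ((Fin d ⊕ Fin d) →₀ ℕ) := insert e1 (insert e2 s₀) with hs
  have hsub : s₀ ⊆ s := fun m hm => by simp [hs, hm]
  obtain ⟨w, hw, hw2⟩ := hs₀ s (le_trans hsub le_rfl)
  -- hw2 : tsum + w = ∑ s; hw : w ∈ I ^ (2M)
  have hge1 : g e1 = a i := by
    rw [hgdef]
    simp only [he1, hX]
    rw [Finsupp.prod_single_index (by simp)]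
    rw [← he1, hX]
    simp [hvdef]
  have hge2 : g e2 = b i := by
    rw [hgdef]
    simp only [he2, hY]
    rw [Finsupp.prod_single_index (by simp)]
    rw [← he2, hY]
    simp [hvdef]
  have hsplit : ∑ m ∈ s, g m = g e1 + g e2 + ∑ m ∈ (s.erase e1).erase e2, g m := by
    rw [← Finset.add_sum_erase _ g (show e1 ∈ s by simp [hs])]
    rw [← Finset.add_sum_erase _ g (show e2 ∈ s.erase e1 by
      simp [hs, Finset.mem_erase, he12.symm])]
    ring
  have hrest : ∑ m ∈ (s.erase e1).erase e2, g m ∈ I ^ (2 * M) := by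
    refine Submodule.sum_mem _ fun m hm => ?_
    rw [Finset.mem_erase, Finset.mem_erase] at hm
    by_cases hc : MvPowerSeries.coeff m G = 0
    · rw [hgdef]; simp [hc]
    · rcases hform m hc with h | h | h
      · exact absurd h hm.2.1
      · exact absurd h hm.1
      · exact hbig m h
  have hfinal : (∑ m ∈ s, g m) - (a i + b i) ∈ I ^ (2 * M) := by
    rw [hsplit, hge1, hge2]
    simpa using hrest
  have : @fglEval R _ I.adicTopology _ G (Sum.elim a b) = ∑' m, g m := rfl
  rw [this]
  have heq : (∑' m, g m) - (a i + b i) =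
      ((∑ m ∈ s, g m) - (a i + b i)) - w := by rw [← hw2]; ring
  rw [heq]
  exact sub_mem hfinal hw

lemma aux_pow_p {R : Type*} [CommRing R] (I : Ideal R) [IsAdicComplete I R] (p : ℕ)
    [CharP R p] {d : ℕ} (F : Fin d → MvPowerSeries (Fin d ⊕ Fin d) R)
    (hlinX : ∀ i, MvPowerSeries.coeff (Finsupp.single (Sum.inl i) 1) (F i) = 1)
    (hlinY : ∀ i, MvPowerSeries.coeff (Finsupp.single (Sum.inr i) 1) (F i) = 1)
    (hform : ∀ i m, MvPowerSeries.coeff m (F i) ≠ 0 →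
      m = Finsupp.single (Sum.inl i) 1 ∨ m = Finsupp.single (Sum.inr i) 1 ∨
        ((∃ j, m (Sum.inl j) ≠ 0) ∧ (∃ j, m (Sum.inr j) ≠ 0) ∧ 2 ≤ m.sum fun _ k => k))
    {S : Type*} [Group S] (φ : S → Fin d → R) (hφone : φ 1 = 0)
    (hmul : ∀ x y : S, ∀ i, φ (x * y) i =
      @fglEval R _ I.adicTopology _ (F i) (Sum.elim (φ x) (φ y)))
    {M : ℕ} (hM : 1 ≤ M) (x : S) (hx : ∀ i, φ x i ∈ I ^ M) :
    ∀ i, φ (x ^ p) i ∈ I ^ (2 * M) := by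
  have key : ∀ j : ℕ, (∀ i, φ (x ^ j) i - j • φ x i ∈ I ^ (2 * M)) ∧
      (∀ i, φ (x ^ j) i ∈ I ^ M) := by
    intro j
    induction j with
    | zero => simp [hφone]
    | succ j ih =>
      obtain ⟨ih1, ih2⟩ := ih
      have hc : ∀ i, φ (x ^ j * x) i - (φ (x ^ j) i + φ x i) ∈ I ^ (2 * M) := by
        intro i
        rw [hmul (x ^ j) x i]
        exact aux_fglEval_sub_mem I (F i) i (hlinX i) (hlinY i)
          (fun m h => (hform i m h).imp id (Or.imp id fun h3 => h3.2.2))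
          hM (φ (x ^ j)) (φ x) ih2 hx
      constructor
      · intro i
        have heq : φ (x ^ (j + 1)) i - (j + 1) • φ x i =
            (φ (x ^ j * x) i - (φ (x ^ j) i + φ x i)) + (φ (x ^ j) i - j • φ x i) := by
          rw [pow_succ, succ_nsmul]; ring
        rw [heq]
        exact add_mem (hc i) (ih1 i)
      · intro i
        have heq : φ (x ^ (j + 1)) i =
            (φ (x ^ j * x) i - (φ (x ^ j) i + φ x i)) + (φ (x ^ j) i + φ x i) := by
          rw [pow_succ]; ring
        rw [heq]
        exact add_mem (Ideal.pow_le_pow_right (by omega) (hc i))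
          (add_mem (ih2 i) (hx i))
  intro i
  have h1 := (key p).1 i
  have h2 : (p : ℕ) • φ x i = 0 := by
    rw [nsmul_eq_mul, show ((p : ℕ) : R) = 0 from CharP.cast_eq_zero R p, zero_mul]
  rwa [h2, sub_zero] at h1

lemma aux_pow_pk {R : Type*} [CommRing R] (I : Ideal R) [IsAdicComplete I R] (p : ℕ)
    [CharP R p] {d : ℕ} (F : Fin d → MvPowerSeries (Fin d ⊕ Fin d) R)
    (hlinX : ∀ i, MvPowerSeries.coeff (Finsupp.single (Sum.inl i) 1) (F i) = 1)
    (hlinY : ∀ i, MvPowerSeries.coeff (Finsupp.single (Sum.inr i) 1) (F i) = 1)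
    (hform : ∀ i m, MvPowerSeries.coeff m (F i) ≠ 0 →
      m = Finsupp.single (Sum.inl i) 1 ∨ m = Finsupp.single (Sum.inr i) 1 ∨
        ((∃ j, m (Sum.inl j) ≠ 0) ∧ (∃ j, m (Sum.inr j) ≠ 0) ∧ 2 ≤ m.sum fun _ k => k))
    {S : Type*} [Group S] (φ : S → Fin d → R) (hφone : φ 1 = 0)
    (hmul : ∀ x y : S, ∀ i, φ (x * y) i =
      @fglEval R _ I.adicTopology _ (F i) (Sum.elim (φ x) (φ y)))
    {N : ℕ} (hN : 1 ≤ N) (x : S) (hx : ∀ i, φ x i ∈ I ^ N) :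
    ∀ k i, φ (x ^ p ^ k) i ∈ I ^ (2 ^ k * N) := by
  intro k
  induction k with
  | zero => simpa using hx
  | succ k ih =>
    intro i
    have h1 : x ^ p ^ (k + 1) = (x ^ p ^ k) ^ p := by
      rw [pow_succ, pow_mul]
    have h2 := aux_pow_p I p F hlinX hlinY hform φ hφone hmul
      (M := 2 ^ k * N) (le_trans hN (Nat.le_mul_of_pos_left N (Nat.two_pow_pos k))) (x ^ p ^ k) ih i
    rw [h1]
    have : 2 * (2 ^ k * N) = 2 ^ (k + 1) * N := by ring
    rwa [this] at h2

lemma aux_card_le_of_generated {Q : Type*} [Group Q] (hc : ∀ x y : Q, x * y = y * x)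
    (e : ℕ) (he : 2 ≤ e) (A : Finset Q) (hgen : Subgroup.closure (A : Set Q) = ⊤)
    (hord : ∀ q : Q, q ^ e = 1) : Nat.card Q ≤ e ^ A.card := by
  classical
  haveI : NeZero e := ⟨by omega⟩
  letI : CommGroup Q := { (inferInstance : Group Q) with mul_comm := hc }
  set g : (A → ZMod e) → Q := fun v => ∏ t ∈ A.attach, (t : Q) ^ (v t).val with hg
  have hmul : ∀ v w, g (v + w) = g v * g w := by
    intro v w
    rw [hg]
    simp only [← Finset.prod_mul_distrib]
    refine Finset.prod_congr rfl fun t _ => ?_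
    rw [Pi.add_apply, ZMod.val_add, ← pow_eq_pow_mod _ (hord (t : Q)), pow_add]
  have hone : g 0 = 1 := by
    rw [hg]
    simp [ZMod.val_zero]
  set Q' : Subgroup Q := {
    carrier := Set.range g
    mul_mem' := by rintro _ _ ⟨v, rfl⟩ ⟨w, rfl⟩; exact ⟨v + w, hmul v w⟩
    one_mem' := ⟨0, hone⟩
    inv_mem' := by
      rintro _ ⟨v, rfl⟩
      refine ⟨-v, ?_⟩
      have : g v * g (-v) = 1 := by rw [← hmul]; simpa using hone
      exact (inv_eq_of_mul_eq_one_right this).symm } with hQ'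
  have hsub : (A : Set Q) ⊆ Q' := by
    intro t ht
    have ht' : t ∈ A := ht
    refine ⟨fun s => if (s : Q) = t then 1 else 0, ?_⟩
    simp only [hg]
    rw [Finset.prod_eq_single (⟨t, ht'⟩ : {x // x ∈ A})]
    · rw [if_pos rfl, ZMod.val_one_eq_one_mod]
      rw [Nat.mod_eq_of_lt (by omega), pow_one]
    · intro b _ hb
      have : (b : Q) ≠ t := by
        intro hbt
        exact hb (Subtype.ext hbt)
      simp [this]
    · intro habs
      exact absurd (Finset.mem_attach _ _) habs
  have htop : ∀ q : Q, q ∈ Q' := by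
    intro q
    have : Subgroup.closure (A : Set Q) ≤ Q' := Subgroup.closure_le Q' |>.mpr hsub
    exact this (hgen ▸ Subgroup.mem_top q)
  have hsurj : Function.Surjective g := fun q => htop q
  have h1 : Nat.card Q ≤ Nat.card (A → ZMod e) := Nat.card_le_card_of_surjective g hsurj
  have h2 : Nat.card ({x // x ∈ A} → ZMod e) = e ^ A.card := by
    rw [Nat.card_fun, Nat.card_zmod, Nat.card_eq_finsetCard]
  omega

open IsLocalRing in
lemma aux_pow_lt {R : Type*} [CommRing R] [IsDomain R] [IsNoetherianRing R] [IsLocalRing R]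
    (hm : maximalIdeal R ≠ ⊥) (j : ℕ) :
    maximalIdeal R ^ (j + 1) < maximalIdeal R ^ j := by
  refine lt_of_le_of_ne (Ideal.pow_le_pow_right (Nat.le_succ j)) ?_
  intro heq
  have hfg : (maximalIdeal R ^ j).FG := IsNoetherian.noetherian _
  have hsmul : (maximalIdeal R ^ j : Ideal R) ≤ maximalIdeal R • (maximalIdeal R ^ j) := by
    rw [smul_eq_mul, ← pow_succ']
    exact le_of_eq heq.symm
  have hjac : maximalIdeal R ≤ (⊥ : Ideal R).jacobson := by
    rw [IsLocalRing.jacobson_eq_maximalIdeal ⊥ bot_ne_top]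
  have hbot := Submodule.eq_bot_of_le_smul_of_le_jacobson_bot (maximalIdeal R)
    (maximalIdeal R ^ j) hfg hsmul hjac
  obtain ⟨r, hr, hr0⟩ := Submodule.exists_mem_ne_zero_of_ne_bot hm
  have : r ^ j ∈ maximalIdeal R ^ j := Ideal.pow_mem_pow hr j
  rw [hbot] at this
  exact pow_ne_zero j hr0 (by simpa using this)

open Filter Topology in
lemma aux_tendsto_clog (C : ℝ) (N : ℕ) (hN : 1 ≤ N) :
    Tendsto (fun n : ℕ => C * ((Nat.clog 2 (N + n) + 1 : ℕ) : ℝ) / n) atTop (𝓝 0) := by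
  have hlog2 : (0 : ℝ) < Real.log 2 := Real.log_pos (by norm_num)
  have hlogn : Tendsto (fun n : ℕ => Real.log n / n) atTop (𝓝 0) := by
    have h1 : Tendsto (fun x : ℝ => Real.log x / x) atTop (𝓝 0) := by
      simpa using Real.isLittleO_log_id_atTop.tendsto_div_nhds_zero
    exact h1.comp tendsto_natCast_atTop_atTop
  have hconst : ∀ D : ℝ, Tendsto (fun n : ℕ => D / n) atTop (𝓝 0) :=
    fun D => tendsto_const_div_atTop_nhds_zero_nat D
  set D : ℝ := Real.log (N + 1) / Real.log 2 + 2 with hD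
  have hbound : ∀ᶠ n : ℕ in atTop, ((Nat.clog 2 (N + n) + 1 : ℕ) : ℝ) ≤
      Real.log n / Real.log 2 + D := by
    filter_upwards [eventually_ge_atTop 2] with n hn
    have h2 : 1 < N + n := by omega
    have hclogpos : 1 ≤ Nat.clog 2 (N + n) := Nat.clog_pos (by norm_num) (by omega)
    have hlt := Nat.pow_pred_clog_lt_self (b := 2) (by norm_num) h2
    have hle1 : ((Nat.clog 2 (N + n) - 1 : ℕ) : ℝ) ≤ Real.logb 2 ((N + n : ℕ) : ℝ) := by
      have hcast : ((2:ℝ) ^ (Nat.clog 2 (N + n) - 1)) ≤ ((N + n : ℕ) : ℝ) := by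
        exact_mod_cast Nat.le_of_lt hlt
      have h3 := Real.logb_le_logb_of_le (b := 2) (by norm_num)
        (by positivity) hcast
      rwa [Real.logb_pow, Real.logb_self_eq_one (by norm_num), mul_one] at h3
    have hlogmono : Real.log ((N + n : ℕ) : ℝ) ≤ Real.log (N + 1) + Real.log n := by
      have h1 : ((N + n : ℕ) : ℝ) ≤ ((N:ℝ) + 1) * n := by
        have hn' : (2:ℝ) ≤ (n:ℝ) := by exact_mod_cast hn
        have hN' : (1:ℝ) ≤ (N:ℝ) := by exact_mod_cast hN
        push_cast
        nlinarith
      calc Real.log ((N + n : ℕ) : ℝ) ≤ Real.log (((N:ℝ) + 1) * n) :=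
            Real.log_le_log (by positivity) h1
      _ = Real.log ((N:ℝ) + 1) + Real.log n := by
            rw [Real.log_mul (by positivity) (by positivity)]
    have hfin : ((Nat.clog 2 (N + n) + 1 : ℕ) : ℝ) ≤ Real.logb 2 ((N + n : ℕ) : ℝ) + 2 := by
      have hc : ((Nat.clog 2 (N + n) + 1 : ℕ) : ℝ)
          = ((Nat.clog 2 (N + n) - 1 : ℕ) : ℝ) + 2 := by
        push_cast [Nat.cast_sub hclogpos]
        ring
      rw [hc]
      linarith [hle1]
    refine hfin.trans ?_
    have hlogb : Real.logb 2 ((N + n : ℕ) : ℝ) ≤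
        (Real.log ((N:ℝ) + 1) + Real.log n) / Real.log 2 := by
      rw [Real.logb]
      gcongr
    rw [hD]
    have heq2 : (Real.log ((N:ℝ) + 1) + Real.log n) / Real.log 2
        = Real.log n / Real.log 2 + Real.log ((N:ℝ)+1) / Real.log 2 := by ring
    rw [heq2] at hlogb
    have : ((N:ℝ) + 1) = ((N:ℕ):ℝ) + 1 := by push_cast; ring
    linarith
  have hsq : Tendsto (fun n : ℕ => |C| * (Real.log n / Real.log 2 + D) / n) atTop (𝓝 0) := by
    have h1 : Tendsto (fun n : ℕ => (|C| / Real.log 2) * (Real.log n / n)) atTop (𝓝 0) := by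
      simpa using (hlogn.const_mul (|C| / Real.log 2))
    have h2 : Tendsto (fun n : ℕ => (|C| * D) / n) atTop (𝓝 0) := hconst _
    have h3 := h1.add h2
    rw [add_zero] at h3
    refine h3.congr' ?_
    filter_upwards [eventually_gt_atTop 0] with n hn
    have hnne : (n:ℝ) ≠ 0 := by positivity
    field_simp
  refine squeeze_zero_norm' ?_ hsq
  filter_upwards [hbound, eventually_gt_atTop 2] with n hb hn
  have hnpos : (0:ℝ) < n := by exact_mod_cast Nat.zero_lt_of_lt hn
  rw [Real.norm_eq_abs, abs_div, abs_mul, Nat.abs_cast, abs_of_pos hnpos]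
  gcongr


/-- In an abelian `R`-standard group over a pro-`p` domain `R` of characteristic `p`,
every topologically finitely generated closed subgroup `H` has Hausdorff dimension `0`
with respect to the standard filtration `{Sₙ}`. -/
theorem abelian_standard_group_fg_subgroup_dimension_zero
    {R : Type*} [CommRing R] [IsDomain R] [IsNoetherianRing R] [IsLocalRing R]
    [Finite (ResidueField R)] [IsAdicComplete (maximalIdeal R) R]
    [tR : TopologicalSpace R] (hadic : tR = (maximalIdeal R).adicTopology)
    (p : ℕ) [Fact p.Prime] [CharP R p]
    (d : ℕ) (F : Fin d → MvPowerSeries (Fin d ⊕ Fin d) R)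
    (hlinX : ∀ i, MvPowerSeries.coeff (Finsupp.single (Sum.inl i) 1) (F i) = 1)
    (hlinY : ∀ i, MvPowerSeries.coeff (Finsupp.single (Sum.inr i) 1) (F i) = 1)
    (hform : ∀ i m, MvPowerSeries.coeff m (F i) ≠ 0 →
      m = Finsupp.single (Sum.inl i) 1 ∨ m = Finsupp.single (Sum.inr i) 1 ∨
        ((∃ j, m (Sum.inl j) ≠ 0) ∧ (∃ j, m (Sum.inr j) ≠ 0) ∧
          2 ≤ m.sum fun _ k => k))
    -- the abelian standard group S of level N and dimension d, identified with (m^N)^(d)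
    (S : Type*) [Group S] [TopologicalSpace S] [IsTopologicalGroup S] [CompactSpace S]
    (hcomm : ∀ x y : S, x * y = y * x)
    (N : ℕ) (hN : 1 ≤ N) (φ : S → Fin d → R)
    (hφinj : Function.Injective φ)
    (hφrange : ∀ x i, φ x i ∈ maximalIdeal R ^ N)
    (hφsurj : ∀ v : Fin d → R, (∀ i, v i ∈ maximalIdeal R ^ N) → ∃ x, φ x = v)
    (hφone : φ 1 = 0) (hφcont : Continuous φ)
    (hmul : ∀ x y : S, ∀ i, φ (x * y) i = fglEval (F i) (Sum.elim (φ x) (φ y)))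
    -- the standard filtration {Sₙ}
    (SG : ℕ → Subgroup S)
    (hSG : ∀ n x, x ∈ SG n ↔ ∀ i, φ x i ∈ maximalIdeal R ^ (N + n))
    (hSGopen : ∀ n, IsOpen (SG n : Set S))
    -- a topologically finitely generated closed subgroup
    (H : Subgroup S) (hHclosed : IsClosed (H : Set S))
    (T : Finset S) (hHfg : H = (Subgroup.closure (T : Set S)).topologicalClosure) :
    Filter.atTop.liminf (fun n =>
      Real.log ((SG n).relIndex H : ℝ) / Real.log ((SG n).index : ℝ)) = 0 := by
  classical
  subst hadic
  by_cases hdeg : Subsingleton S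
  · have hrel1 : ∀ n, (SG n).relIndex H = 1 := by
      intro n
      have htop : SG n = ⊤ := by
        rw [Subgroup.eq_top_iff']
        intro x
        rw [Subsingleton.elim x 1]
        exact (SG n).one_mem
      rw [htop, Subgroup.relIndex_top_left]
    have : (fun n => Real.log ((SG n).relIndex H : ℝ) / Real.log ((SG n).index : ℝ))
        = fun _ => (0 : ℝ) := by
      funext n
      rw [hrel1 n]
      norm_num
    rw [this]
    exact Filter.liminf_const 0
  -- nondegenerate case
  have hnd : d ≠ 0 ∧ maximalIdeal R ≠ ⊥ := by
    by_contra hcon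
    apply hdeg
    constructor
    intro x y
    apply hφinj
    funext i
    rcases (not_and_or.mp hcon) with h | h
    · push_neg at h
      exact absurd i.isLt (by omega)
    · push_neg at h
      have hx := hφrange x i
      have hy := hφrange y i
      rw [h] at hx hy
      have hbot : (⊥ : Ideal R) ^ N = ⊥ := by
        rw [← Ideal.zero_eq_bot, zero_pow (by omega)]
      rw [hbot, Ideal.mem_bot] at hx hy
      rw [hx, hy]
  obtain ⟨hd, hm⟩ := hnd
  have hp2 : 2 ≤ p := (Fact.out : p.Prime).two_le
  have hTle : Subgroup.closure (T : Set S) ≤ H := hHfg ▸ Subgroup.le_topologicalClosure _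
  have hTH : ∀ t ∈ T, t ∈ H := fun t ht => hTle (Subgroup.subset_closure ht)
  -- exponent
  have hordS : ∀ n (x : S), x ^ (p ^ (Nat.clog 2 (N + n) + 1)) ∈ SG n := by
    intro n x
    have h1 := aux_pow_pk (maximalIdeal R) p F hlinX hlinY hform φ hφone hmul hN x
      (fun i => hφrange x i) (Nat.clog 2 (N + n) + 1)
    rw [hSG]
    intro i
    refine Ideal.pow_le_pow_right ?_ (h1 i)
    have h2 : N + n ≤ 2 ^ (Nat.clog 2 (N + n)) := Nat.le_pow_clog (by norm_num) _
    calc N + n ≤ 2 ^ (Nat.clog 2 (N + n)) := h2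
    _ ≤ 2 ^ (Nat.clog 2 (N + n) + 1) := Nat.pow_le_pow_right (by norm_num) (Nat.le_succ _)
    _ ≤ 2 ^ (Nat.clog 2 (N + n) + 1) * N := Nat.le_mul_of_pos_right _ (by omega)
  -- index finiteness and lower bound
  have hidxne : ∀ n, (SG n).index ≠ 0 := by
    intro n
    haveI := Subgroup.quotient_finite_of_isOpen (SG n) (hSGopen n)
    exact Subgroup.index_ne_zero_of_finite
  have hSGmono : ∀ n, SG (n + 1) ≤ SG n := by
    intro n x hx
    rw [hSG] at hx ⊢
    intro i
    exact Ideal.pow_le_pow_right (by omega) (hx i)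
  have hSGzero : SG 0 = ⊤ := by
    rw [Subgroup.eq_top_iff']
    intro x
    rw [hSG]
    intro i
    simpa using hφrange x i
  have hSGne : ∀ n, ¬ (SG n ≤ SG (n + 1)) := by
    intro n hle
    have hlt := aux_pow_lt (R := R) hm (N + n)
    obtain ⟨r, hr1, hr2⟩ := SetLike.exists_of_lt hlt
    obtain ⟨x, hx⟩ := hφsurj (fun _ => r)
      (fun i => Ideal.pow_le_pow_right (by omega) hr1)
    have hxn : x ∈ SG n := by
      rw [hSG]
      intro i
      rw [hx]
      exact hr1
    have := hle hxn
    rw [hSG] at this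
    have hi : φ x ⟨0, by omega⟩ ∈ maximalIdeal R ^ (N + n + 1) :=
      (by simpa [Nat.add_assoc] using this ⟨0, by omega⟩)
    rw [hx] at hi
    exact hr2 (by simpa [Nat.add_assoc] using hi)
  have hidxlb : ∀ n, 2 ^ n ≤ (SG n).index := by
    intro n
    induction n with
    | zero => simp [hSGzero, Subgroup.index_top]
    | succ n ih =>
      have heq := Subgroup.relIndex_mul_index (hSGmono n)
      have hrne : (SG (n + 1)).relIndex (SG n) ≠ 0 := by
        intro h0
        apply hidxne (n + 1)
        rw [← heq, h0, zero_mul]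
      have hrne1 : (SG (n + 1)).relIndex (SG n) ≠ 1 := by
        intro h1
        exact hSGne n (Subgroup.relIndex_eq_one.mp h1)
      have h2le : 2 ≤ (SG (n + 1)).relIndex (SG n) := by omega
      calc 2 ^ (n + 1) = 2 * 2 ^ n := by ring
      _ ≤ (SG (n + 1)).relIndex (SG n) * (SG n).index := Nat.mul_le_mul h2le ih
      _ = (SG (n + 1)).index := heq
  -- relIndex upper bound
  have hrelbound : ∀ n, 0 < (SG n).relIndex H ∧
      (SG n).relIndex H ≤ p ^ ((Nat.clog 2 (N + n) + 1) * T.card) := by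
    intro n
    haveI hnormal : ((SG n).subgroupOf H).Normal := by
      constructor
      intro a ha g
      rw [Subgroup.mem_subgroupOf] at ha ⊢
      simp only [Subgroup.coe_mul, Subgroup.coe_inv]
      rw [hcomm (g : S) (a : S), mul_inv_cancel_right]
      exact ha
    set e := p ^ (Nat.clog 2 (N + n) + 1) with he
    have he2 : 2 ≤ e := le_trans hp2 (Nat.le_self_pow (by omega) p)
    set K := (SG n).subgroupOf H with hK
    have hcQ : ∀ x y : H ⧸ K, x * y = y * x := by
      intro x y
      obtain ⟨a, rfl⟩ := QuotientGroup.mk_surjective x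
      obtain ⟨b, rfl⟩ := QuotientGroup.mk_surjective y
      rw [← QuotientGroup.mk_mul, ← QuotientGroup.mk_mul]
      congr 1
      exact Subtype.ext (hcomm (a : S) (b : S))
    set A : Finset (H ⧸ K) :=
      T.attach.image (fun t => (QuotientGroup.mk ⟨t.1, hTH t.1 t.2⟩ : H ⧸ K)) with hA
    have hAcard : A.card ≤ T.card :=
      le_trans Finset.card_image_le (le_of_eq (Finset.card_attach))
    have hord : ∀ q : H ⧸ K, q ^ e = 1 := by
      intro q
      obtain ⟨a, rfl⟩ := QuotientGroup.mk_surjective q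
      rw [← QuotientGroup.mk_pow, QuotientGroup.eq_one_iff]
      rw [Subgroup.mem_subgroupOf]
      have : ((a ^ e : H) : S) = (a : S) ^ e := by
        push_cast
        rfl
      rw [this, he]
      exact hordS n (a : S)
    have hgen : Subgroup.closure (A : Set (H ⧸ K)) = ⊤ := by
      rw [eq_top_iff]
      rintro q -
      obtain ⟨h, rfl⟩ := QuotientGroup.mk_surjective q
      have hden : ((h : S)) ∈ _root_.closure (↑(Subgroup.closure (T : Set S)) : Set S) := by
        have h2 : (h : S) ∈ (Subgroup.closure (T : Set S)).topologicalClosure := by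
          rw [← hHfg]; exact h.2
        exact h2
      have hUopen : IsOpen ((fun s => (h : S)⁻¹ * s) ⁻¹' (SG n : Set S)) :=
        (hSGopen n).preimage (continuous_const.mul continuous_id)
      have hhU : (h : S) ∈ ((fun s => (h : S)⁻¹ * s) ⁻¹' (SG n : Set S)) := by
        simp only [Set.mem_preimage, inv_mul_cancel]
        exact SetLike.mem_coe.mpr (SG n).one_mem
      obtain ⟨w, hwU, hwT⟩ := _root_.mem_closure_iff.mp hden _ hUopen hhU
      have hwH : w ∈ H := hTle hwT
      have hmk : (QuotientGroup.mk h : H ⧸ K) = QuotientGroup.mk ⟨w, hwH⟩ := by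
        rw [QuotientGroup.eq, Subgroup.mem_subgroupOf]
        simpa using hwU
      rw [hmk]
      have hgoal : ∀ x (hx : x ∈ Subgroup.closure (T : Set S)) (hxH : x ∈ H),
          (QuotientGroup.mk ⟨x, hxH⟩ : H ⧸ K) ∈ Subgroup.closure (A : Set (H ⧸ K)) := by
        intro x hx
        induction hx using Subgroup.closure_induction with
        | mem y hy =>
          intro hyH
          apply Subgroup.subset_closure
          rw [hA]
          simp only [Finset.coe_image, Set.mem_image]
          exact ⟨⟨y, hy⟩, by simpa using Finset.mem_attach _ _, rfl⟩
        | one =>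
          intro h1H
          have h11 : (⟨(1 : S), h1H⟩ : H) = 1 := rfl
          rw [h11]
          exact Subgroup.one_mem _
        | mul x y hx hy ihx ihy =>
          intro hxyH
          have hxH : x ∈ H := hTle hx
          have hyH : y ∈ H := hTle hy
          have : (⟨x * y, hxyH⟩ : H) = ⟨x, hxH⟩ * ⟨y, hyH⟩ := rfl
          rw [this, QuotientGroup.mk_mul]
          exact Subgroup.mul_mem _ (ihx hxH) (ihy hyH)
        | inv x hx ihx =>
          intro hinvH
          have hxH : x ∈ H := hTle hx
          have : (⟨x⁻¹, hinvH⟩ : H) = (⟨x, hxH⟩)⁻¹ := rfl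
          rw [this]
          have hmkinv : (QuotientGroup.mk ((⟨x, hxH⟩ : H)⁻¹) : H ⧸ K)
              = (QuotientGroup.mk (⟨x, hxH⟩ : H))⁻¹ := rfl
          rw [hmkinv]
          exact Subgroup.inv_mem _ (ihx hxH)
      exact hgoal w hwT hwH
    have hcard := aux_card_le_of_generated hcQ e he2 A hgen hord
    have hfinQ : Finite (H ⧸ K) := by
      haveI : CompactSpace H := isCompact_iff_compactSpace.mp hHclosed.isCompact
      apply Subgroup.quotient_finite_of_isOpen
      have : (K : Set H) = (Subtype.val : H → S) ⁻¹' (SG n : Set S) := rfl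
      rw [this]
      exact (hSGopen n).preimage continuous_subtype_val
    have hrel : (SG n).relIndex H = Nat.card (H ⧸ K) := rfl
    constructor
    · rw [hrel]
      exact Nat.card_pos
    · rw [hrel]
      calc Nat.card (H ⧸ K) ≤ e ^ A.card := hcard
      _ ≤ e ^ T.card := Nat.pow_le_pow_right (by omega) hAcard
      _ = p ^ ((Nat.clog 2 (N + n) + 1) * T.card) := by rw [he, ← pow_mul]
  -- final limit computation
  have hlog2 : (0:ℝ) < Real.log 2 := Real.log_pos (by norm_num)
  set C : ℝ := (T.card : ℝ) * Real.log p / Real.log 2 with hC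
  have htend := aux_tendsto_clog C N hN
  have hmain : Tendsto (fun n =>
      Real.log ((SG n).relIndex H : ℝ) / Real.log ((SG n).index : ℝ)) atTop (𝓝 0) := by
    refine tendsto_of_tendsto_of_tendsto_of_le_of_le' tendsto_const_nhds htend ?_ ?_
    · filter_upwards with n
      exact div_nonneg (Real.log_natCast_nonneg _) (Real.log_natCast_nonneg _)
    · filter_upwards [eventually_ge_atTop 1] with n hn1
      set kn := Nat.clog 2 (N + n) + 1 with hkn
      have hnpos : (0:ℝ) < n := by exact_mod_cast hn1
      have hnum : Real.log ((SG n).relIndex H : ℝ) ≤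
          (T.card : ℝ) * Real.log p * (kn : ℝ) := by
        have h1 : ((SG n).relIndex H : ℝ) ≤ ((p : ℝ)) ^ (kn * T.card) := by
          exact_mod_cast (hrelbound n).2
        have h2 := Real.log_le_log
          (by exact_mod_cast (hrelbound n).1) h1
        rw [Real.log_pow] at h2
        have h3 : ((kn * T.card : ℕ) : ℝ) * Real.log p
            = (T.card : ℝ) * Real.log p * (kn : ℝ) := by push_cast; ring
        rw [h3] at h2
        exact h2
      have hden : (n:ℝ) * Real.log 2 ≤ Real.log ((SG n).index : ℝ) := by
        have h1 : (((2:ℕ) ^ n : ℕ) : ℝ) ≤ ((SG n).index : ℝ) := by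
          exact_mod_cast hidxlb n
        have h2 := Real.log_le_log (by positivity) h1
        have h3 : (((2:ℕ) ^ n : ℕ) : ℝ) = (2:ℝ) ^ n := by push_cast; ring
        rw [h3, Real.log_pow] at h2
        exact h2
      have hb : (0:ℝ) < (n:ℝ) * Real.log 2 := mul_pos hnpos hlog2
      calc Real.log ((SG n).relIndex H : ℝ) / Real.log ((SG n).index : ℝ)
          ≤ Real.log ((SG n).relIndex H : ℝ) / ((n:ℝ) * Real.log 2) :=
            div_le_div_of_nonneg_left (Real.log_natCast_nonneg _) hb hden
      _ ≤ ((T.card : ℝ) * Real.log p * (kn : ℝ)) / ((n:ℝ) * Real.log 2) :=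
            div_le_div_of_nonneg_right hnum hb.le
      _ = C * ((kn : ℕ) : ℝ) / n := by
            rw [hC, div_mul_eq_mul_div, div_div, mul_comm (Real.log 2) (n:ℝ)]
  exact hmain.liminf_eq
end

section
/- Let G be a finite-dimensional perfect Lie algebra over a field F and let L = G ⊗_F tF[t] with the natural grading L_n = G⊗t^n. Then every graded F-subalgebra of L of infinite codimension is contained in a graded F-subalgebra of infinite codimension which is maximal with respect to that property. -/
open scoped TensorProduct
open Polynomial

namespace GradedTFtStmt

variable (F : Type*) [Field F] (G : Type*) [LieRing G] [LieAlgebra F G]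

/-- The positive part `G ⊗ tF[t]` inside `F[t] ⊗ G`. -/
noncomputable def posPart : Submodule F (Polynomial F ⊗[F] G) :=
  Submodule.span F
    {z : Polynomial F ⊗[F] G | ∃ n : ℕ, 1 ≤ n ∧ ∃ g : G, z = (X ^ n : Polynomial F) ⊗ₜ[F] g}

/-- The projection onto the `n`-th homogeneous component `G ⊗ tⁿ` of `F[t] ⊗ G`. -/
noncomputable def proj (n : ℕ) : Polynomial F ⊗[F] G →ₗ[F] Polynomial F ⊗[F] G :=
  (TensorProduct.mk F (Polynomial F) G ((X : Polynomial F) ^ n)).comp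
    ((TensorProduct.lid F G).toLinearMap.comp (LinearMap.rTensor G (lcoeff F n)))

/-- A subspace is bracket-closed (an `F`-subalgebra of the Lie algebra). -/
def IsSubalg (K : Submodule F (Polynomial F ⊗[F] G)) : Prop :=
  ∀ a ∈ K, ∀ b ∈ K, ⁅a, b⁆ ∈ K

/-- A subspace is graded if it contains the homogeneous components of its elements. -/
def IsGraded (K : Submodule F (Polynomial F ⊗[F] G)) : Prop :=
  ∀ z ∈ K, ∀ n : ℕ, proj F G n z ∈ K

/-- A subspace `K ≤ P` has infinite codimension in `P` if `P` is not contained in the sum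
of `K` and a finite-dimensional subspace. -/
def InfCodim (K : Submodule F (Polynomial F ⊗[F] G)) : Prop :=
  ¬ ∃ W : Submodule F (Polynomial F ⊗[F] G), FiniteDimensional F W ∧ posPart F G ≤ K ⊔ W

lemma proj_tmul (n : ℕ) (p : Polynomial F) (g : G) :
    proj F G n (p ⊗ₜ[F] g) = p.coeff n • (((X : Polynomial F) ^ n) ⊗ₜ[F] g) := by
  simp [proj, TensorProduct.tmul_smul]

lemma proj_tmul_pow (n m : ℕ) (g : G) :
    proj F G n (((X : Polynomial F) ^ m) ⊗ₜ[F] g)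
      = if n = m then ((X : Polynomial F) ^ n) ⊗ₜ[F] g else 0 := by
  rw [proj_tmul, Polynomial.coeff_X_pow]
  by_cases h : m = n <;> simp [h, eq_comm]

lemma proj_eventually_zero (z : Polynomial F ⊗[F] G) :
    ∃ D : ℕ, ∀ n > D, proj F G n z = 0 := by
  induction z using TensorProduct.induction_on with
  | zero => exact ⟨0, fun n _ => map_zero _⟩
  | tmul p g =>
      exact ⟨p.natDegree, fun n hn => by
        rw [proj_tmul, Polynomial.coeff_eq_zero_of_natDegree_lt hn, zero_smul]⟩
  | add x y hx hy =>
      obtain ⟨D₁, h₁⟩ := hx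
      obtain ⟨D₂, h₂⟩ := hy
      exact ⟨max D₁ D₂, fun n hn => by
        rw [map_add, h₁ n (lt_of_le_of_lt (le_max_left _ _) hn),
          h₂ n (lt_of_le_of_lt (le_max_right _ _) hn), add_zero]⟩

lemma tmul_mem_posPart (n : ℕ) (hn : 1 ≤ n) (g : G) :
    ((X : Polynomial F) ^ n) ⊗ₜ[F] g ∈ posPart F G :=
  Submodule.subset_span ⟨n, hn, g, rfl⟩

/-- If a graded subspace has finite codimension, it contains all high components. -/
lemma exists_bound_of_not_infCodim (U : Submodule F (Polynomial F ⊗[F] G))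
    (hgr : IsGraded F G U) (h : ¬ InfCodim F G U) :
    ∃ D : ℕ, ∀ n > D, ∀ g : G, ((X : Polynomial F) ^ n) ⊗ₜ[F] g ∈ U := by
  rw [InfCodim, not_not] at h
  obtain ⟨W, hWfin, hle⟩ := h
  -- a common degree bound for a finite spanning set of W
  obtain ⟨s, hsW⟩ := (Submodule.fg_top W).mp (Module.finite_def.mp hWfin)
  choose Df hDf using fun w : Polynomial F ⊗[F] G => proj_eventually_zero F G w
  classical
  set D : ℕ := s.sup Df + 1 with hD
  have hWzero : ∀ n > D, ∀ w ∈ W, proj F G n w = 0 := by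
    intro n hn w hw
    rw [← hsW] at hw
    refine Submodule.span_induction ?_ (map_zero _) ?_ ?_ hw
    · intro x hx
      have hle' : Df x ≤ s.sup Df := Finset.le_sup hx
      exact hDf x n (by omega)
    · intro x y _ _ hx hy; rw [map_add, hx, hy, add_zero]
    · intro c x _ hx; rw [map_smul, hx, smul_zero]
  refine ⟨D, fun n hn g => ?_⟩
  have hmem : ((X : Polynomial F) ^ n) ⊗ₜ[F] g ∈ U ⊔ W :=
    hle (tmul_mem_posPart F G n (le_trans (Nat.one_le_iff_ne_zero.mpr
      (by omega)) (le_of_lt hn)) g)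
  obtain ⟨u, hu, w, hw, huw⟩ := Submodule.mem_sup.mp hmem
  have : proj F G n (((X : Polynomial F) ^ n) ⊗ₜ[F] g) = proj F G n u + proj F G n w := by
    rw [← map_add, huw]
  rw [proj_tmul_pow, if_pos rfl, hWzero n hn w hw, add_zero] at this
  rw [this]
  exact hgr u hu n

/-- If a subspace contains all high components, it does not have infinite codimension. -/
lemma not_infCodim_of_bound [FiniteDimensional F G]
    (M : Submodule F (Polynomial F ⊗[F] G)) (D : ℕ)
    (h : ∀ n > D, ∀ g : G, ((X : Polynomial F) ^ n) ⊗ₜ[F] g ∈ M) :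
    ¬ InfCodim F G M := by
  classical
  rw [InfCodim, not_not]
  refine ⟨(Finset.Icc 1 D).sup
    (fun n => LinearMap.range (TensorProduct.mk F (Polynomial F) G ((X : Polynomial F) ^ n))),
    ?_, ?_⟩
  · haveI : ∀ n : ℕ, FiniteDimensional F
        (LinearMap.range (TensorProduct.mk F (Polynomial F) G ((X : Polynomial F) ^ n))) :=
      fun n => Module.Finite.range _
    exact Submodule.finiteDimensional_finset_sup _ _
  · rw [posPart, Submodule.span_le]
    rintro z ⟨n, hn, g, rfl⟩
    by_cases hle : n ≤ D
    · refine Submodule.mem_sup_right (Finset.le_sup (f := fun n =>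
        LinearMap.range (TensorProduct.mk F (Polynomial F) G ((X : Polynomial F) ^ n)))
        (Finset.mem_Icc.mpr ⟨hn, hle⟩) ?_)
      exact ⟨g, rfl⟩
    · exact Submodule.mem_sup_left (h n (by omega) g)

/-- For a finite-dimensional perfect Lie algebra `G` over a field `F`, every graded
subalgebra of `L = G ⊗ tF[t]` of infinite codimension is contained in one which is maximal
among graded subalgebras of infinite codimension. -/
theorem exists_maximal_graded_subalgebra_of_infinite_codimension
    [FiniteDimensional F G]
    (hperf : ∀ g : G, g ∈ Submodule.span F {z : G | ∃ a b : G, z = ⁅a, b⁆})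
    (K : Submodule F (Polynomial F ⊗[F] G))
    (hKP : K ≤ posPart F G) (hKalg : IsSubalg F G K) (hKgr : IsGraded F G K)
    (hKcodim : InfCodim F G K) :
    ∃ M : Submodule F (Polynomial F ⊗[F] G),
      K ≤ M ∧ M ≤ posPart F G ∧ IsSubalg F G M ∧ IsGraded F G M ∧ InfCodim F G M ∧
      ∀ M' : Submodule F (Polynomial F ⊗[F] G),
        M' ≤ posPart F G → IsSubalg F G M' → IsGraded F G M' → InfCodim F G M' →
        M ≤ M' → M' = M := by
  classical
  -- a finite spanning set of G
  obtain ⟨sG, hsG⟩ := Module.finite_def.mp (inferInstance : Module.Finite F G)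
  -- Propagation: a subalgebra containing components D < n ≤ 2D+2 contains all n > D.
  have propagate : ∀ (M : Submodule F (Polynomial F ⊗[F] G)), IsSubalg F G M →
      ∀ D : ℕ, (∀ g ∈ sG, ∀ n, D < n → n ≤ 2 * D + 2 →
        ((X : Polynomial F) ^ n) ⊗ₜ[F] g ∈ M) →
      ∀ n > D, ∀ g : G, ((X : Polynomial F) ^ n) ⊗ₜ[F] g ∈ M := by
    intro M hMalg D hbase n
    induction n using Nat.strong_induction_on with
    | _ n ih =>
      intro hn g
      by_cases hsmall : n ≤ 2 * D + 2
      · -- use the spanning set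
        have : g ∈ Submodule.comap
            (TensorProduct.mk F (Polynomial F) G ((X : Polynomial F) ^ n)) M := by
          have htop : (⊤ : Submodule F G) ≤ Submodule.comap
              (TensorProduct.mk F (Polynomial F) G ((X : Polynomial F) ^ n)) M := by
            rw [← hsG, Submodule.span_le]
            intro x hx
            exact hbase x hx n hn hsmall
          exact htop trivial
        exact this
      · -- use perfectness and brackets
        push_neg at hsmall
        have h1 : ∀ a : G, ((X : Polynomial F) ^ (D + 1)) ⊗ₜ[F] a ∈ M := fun a =>
          ih (D + 1) (by omega) (by omega) a
        have h2 : ∀ b : G, ((X : Polynomial F) ^ (n - D - 1)) ⊗ₜ[F] b ∈ M := fun b =>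
          ih (n - D - 1) (by omega) (by omega) b
        have hsub : Submodule.span F {z : G | ∃ a b : G, z = ⁅a, b⁆} ≤
            Submodule.comap (TensorProduct.mk F (Polynomial F) G ((X : Polynomial F) ^ n)) M := by
          rw [Submodule.span_le]
          rintro z ⟨a, b, rfl⟩
          have hb : ⁅((X : Polynomial F) ^ (D + 1)) ⊗ₜ[F] a,
              ((X : Polynomial F) ^ (n - D - 1)) ⊗ₜ[F] b⁆ ∈ M :=
            hMalg _ (h1 a) _ (h2 b)
          have heq : ⁅((X : Polynomial F) ^ (D + 1)) ⊗ₜ[F] a,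
              ((X : Polynomial F) ^ (n - D - 1)) ⊗ₜ[F] b⁆
              = ((X : Polynomial F) ^ n) ⊗ₜ[F] ⁅a, b⁆ := by
            have : ((X : Polynomial F) ^ (D + 1)) * ((X : Polynomial F) ^ (n - D - 1))
                = (X : Polynomial F) ^ n := by
              rw [← pow_add]; congr 1; omega
            rw [LieAlgebra.ExtendScalars.bracket_tmul, this]
          show ((X : Polynomial F) ^ n) ⊗ₜ[F] ⁅a, b⁆ ∈ M
          rw [← heq]; exact hb
        exact hsub (hperf g)
  -- the set for Zorn's lemma
  set S : Set (Submodule F (Polynomial F ⊗[F] G)) :=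
    {M | K ≤ M ∧ M ≤ posPart F G ∧ IsSubalg F G M ∧ IsGraded F G M ∧ InfCodim F G M}
  have hKS : K ∈ S := ⟨le_rfl, hKP, hKalg, hKgr, hKcodim⟩
  have hub : ∀ c ⊆ S, IsChain (· ≤ ·) c → ∀ y ∈ c, ∃ ub ∈ S, ∀ z ∈ c, z ≤ ub := by
    intro c hcS hchain y hy
    have hdir : DirectedOn (· ≤ ·) c := hchain.directedOn
    have hne : c.Nonempty := ⟨y, hy⟩
    have hmem : ∀ z, z ∈ sSup c ↔ ∃ N ∈ c, z ∈ N := fun z =>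
      Submodule.mem_sSup_of_directed hne hdir
    refine ⟨sSup c, ⟨le_trans (hcS hy).1 (le_sSup hy), ?_, ?_, ?_, ?_⟩,
      fun z hz => le_sSup hz⟩
    · exact sSup_le fun N hN => (hcS hN).2.1
    · -- subalgebra
      intro a ha b hb
      obtain ⟨N₁, hN₁, ha⟩ := (hmem a).mp ha
      obtain ⟨N₂, hN₂, hb⟩ := (hmem b).mp hb
      obtain ⟨N, hN, h₁, h₂⟩ := hdir N₁ hN₁ N₂ hN₂
      exact (hmem _).mpr ⟨N, hN, (hcS hN).2.2.1 a (h₁ ha) b (h₂ hb)⟩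
    · -- graded
      intro z hz n
      obtain ⟨N, hN, hz⟩ := (hmem z).mp hz
      exact (hmem _).mpr ⟨N, hN, (hcS hN).2.2.2.1 z hz n⟩
    · -- infinite codimension
      intro hfin
      have hgrU : IsGraded F G (sSup c) := by
        intro z hz n
        obtain ⟨N, hN, hz⟩ := (hmem z).mp hz
        exact (hmem _).mpr ⟨N, hN, (hcS hN).2.2.2.1 z hz n⟩
      obtain ⟨D, hD⟩ := exists_bound_of_not_infCodim F G (sSup c) hgrU (not_not.mpr hfin)
      -- collect the finitely many needed elements in one member of the chain
      set T : Finset (Polynomial F ⊗[F] G) :=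
        ((Finset.Icc (D + 1) (2 * D + 2)) ×ˢ sG).image
          (fun p => ((X : Polynomial F) ^ p.1) ⊗ₜ[F] p.2) with hT
      haveI : Nonempty c := hne.to_subtype
      have hTsub : (T : Set (Polynomial F ⊗[F] G)) ⊆ ⋃ i : c, ((i.1 : Submodule F (Polynomial F ⊗[F] G)) : Set (Polynomial F ⊗[F] G)) := by
        intro z hz
        simp only [hT, Finset.coe_image, Set.mem_image, Finset.mem_coe, Finset.mem_product,
          Finset.mem_Icc] at hz
        obtain ⟨⟨n, g⟩, ⟨⟨hn1, _⟩, _⟩, rfl⟩ := hz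
        obtain ⟨N, hN, hzN⟩ := (hmem _).mp (hD n (by omega) g)
        exact Set.mem_iUnion.mpr ⟨⟨N, hN⟩, hzN⟩
      have hdir' : Directed (· ⊆ ·) (fun i : c => ((i.1 : Submodule F (Polynomial F ⊗[F] G)) : Set (Polynomial F ⊗[F] G))) := by
        intro i j
        obtain ⟨N, hN, h₁, h₂⟩ := hdir i i.2 j j.2
        exact ⟨⟨N, hN⟩, h₁, h₂⟩
      obtain ⟨⟨N, hNc⟩, hTN⟩ := hdir'.exists_mem_subset_of_finset_subset_biUnion hTsub
      -- N contains all components D < n ≤ 2D+2 hence all n > D, so not InfCodim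
      refine (hcS hNc).2.2.2.2 (not_not.mp ?_)
      refine fun hcontra => hcontra ?_
      have := not_infCodim_of_bound F G N D
        (propagate N (hcS hNc).2.2.1 D ?_)
      · exact absurd hcontra this
      · intro g hg n hn1 hn2
        refine hTN ?_
        simp only [hT, Finset.coe_image, Set.mem_image, Finset.mem_coe, Finset.mem_product,
          Finset.mem_Icc]
        exact ⟨⟨n, g⟩, ⟨⟨by omega, hn2⟩, hg⟩, rfl⟩
  obtain ⟨M, hKM, hMS, hMmax⟩ := zorn_le_nonempty₀ S hub K hKS
  exact ⟨M, hKM, hMS.2.1, hMS.2.2.1, hMS.2.2.2.1, hMS.2.2.2.2,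
    fun M' hP' halg' hgr' hcodim' hMM' =>
      le_antisymm (hMmax ⟨le_trans hKM hMM', hP', halg', hgr', hcodim'⟩ hMM') hMM'⟩

end GradedTFtStmt
end
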